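/- arXiv:2012.07476 — 9 statements merged into one kernel-verified Lean document; each statement's English description precedes it below -/
import Mathlib

section
/- Let D > 0 and C ∈ ℝ. Let F : (0,∞) → ℝ be locally integrable and possess a one-sided limit F(t−) from the left and F(t+) from the right at every t > 0, as well as a right limit F(0+) at 0. Assume that F(τ₂+) + D ∫_{τ₁}^{τ₂} F(t) dt ≤ F(τ₁−) + C·(τ₂ − τ₁) holds for all 0 < τ₁ ≤ τ₂. Then for every t > 0 one has F(t−) ≤ exp(−D t)·(F(0+) − C/D) + C/D and F(t+) ≤ exp(−D t)·(F(0+) − C/D) + C/D. -/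
open MeasureTheory Filter Set
open scoped Topology

/-- Gronwall-type estimate for BV functions: if `F` is locally integrable on `(0,∞)`,
possesses one-sided limits `Fm t` (from the left) and `Fp t` (from the right) at every
`t > 0` as well as a right limit `Fp 0` at `0`, and satisfies
`F(τ₂+) + D ∫_{τ₁}^{τ₂} F ≤ F(τ₁−) + C (τ₂ − τ₁)` for all `0 < τ₁ ≤ τ₂`, then
`F(t±) ≤ exp(−Dt) (F(0+) − C/D) + C/D` for all `t > 0`. -/
theorem stmt_0 (D C : ℝ) (hD : 0 < D) (F Fm Fp : ℝ → ℝ)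
    (hloc : ∀ a b : ℝ, 0 < a → a ≤ b → IntervalIntegrable F volume a b)
    (hFm : ∀ t : ℝ, 0 < t → Tendsto F (nhdsWithin t (Iio t)) (nhds (Fm t)))
    (hFp : ∀ t : ℝ, 0 ≤ t → Tendsto F (nhdsWithin t (Ioi t)) (nhds (Fp t)))
    (hineq : ∀ τ₁ τ₂ : ℝ, 0 < τ₁ → τ₁ ≤ τ₂ →
      Fp τ₂ + D * ∫ t in τ₁..τ₂, F t ≤ Fm τ₁ + C * (τ₂ - τ₁)) :
    ∀ t : ℝ, 0 < t →
      Fm t ≤ Real.exp (-D * t) * (Fp 0 - C / D) + C / D ∧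
      Fp t ≤ Real.exp (-D * t) * (Fp 0 - C / D) + C / D := by
  -- Step 1: the right limits `Fp` tend to the left limit `Fm t` from the left
  have hFpFm : ∀ t : ℝ, 0 < t → Tendsto Fp (𝓝[<] t) (𝓝 (Fm t)) := by
    intro t ht
    rw [Metric.tendsto_nhds]
    intro ε hε
    have h1 : ∀ᶠ x in 𝓝[<] t, dist (F x) (Fm t) < ε / 2 :=
      (Metric.tendsto_nhds.mp (hFm t ht)) (ε / 2) (by linarith)
    obtain ⟨a, ha, hsub⟩ := mem_nhdsLT_iff_exists_Ioo_subset.mp h1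
    have ha't : max a (t / 2) < t := max_lt ha (by linarith)
    filter_upwards [Ioo_mem_nhdsLT ha't] with s hs
    have hs0 : 0 < s := lt_of_le_of_lt (by positivity : (0:ℝ) ≤ t / 2)
      (lt_of_le_of_lt (le_max_right a (t / 2)) hs.1)
    have hkey : dist (Fp s) (Fm t) ≤ ε / 2 := by
      refine le_of_tendsto ((hFp s hs0.le).dist tendsto_const_nhds) ?_
      filter_upwards [Ioo_mem_nhdsGT hs.2] with x hx
      exact le_of_lt (hsub ⟨lt_trans (lt_of_le_of_lt (le_max_left a (t/2)) hs.1) hx.1, hx.2⟩)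
    linarith
  -- Step 2: the left limits `Fm` tend to `Fp 0` as t → 0⁺
  have hFm0 : Tendsto Fm (𝓝[>] (0:ℝ)) (𝓝 (Fp 0)) := by
    rw [Metric.tendsto_nhds]
    intro ε hε
    have h1 : ∀ᶠ x in 𝓝[>] (0:ℝ), dist (F x) (Fp 0) < ε / 2 :=
      (Metric.tendsto_nhds.mp (hFp 0 le_rfl)) (ε / 2) (by linarith)
    obtain ⟨u, hu, hsub⟩ := mem_nhdsGT_iff_exists_Ioo_subset.mp h1
    filter_upwards [Ioo_mem_nhdsGT hu] with s hs
    have hkey : dist (Fm s) (Fp 0) ≤ ε / 2 := by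
      refine le_of_tendsto ((hFm s hs.1).dist tendsto_const_nhds) ?_
      filter_upwards [Ioo_mem_nhdsLT hs.1] with x hx
      exact le_of_lt (hsub ⟨hx.1, lt_trans hx.2 hs.2⟩)
    linarith
  -- Step 3 (key Gronwall estimate)
  have key : ∀ t₀ t : ℝ, 0 < t₀ → t₀ ≤ t →
      Fp t ≤ Real.exp (-D * (t - t₀)) * (Fm t₀ - C / D) + C / D := by
    intro t₀ t ht₀ ht
    have ht0 : 0 < t := lt_of_lt_of_le ht₀ ht
    set V : ℝ → ℝ := fun τ => ∫ s in t₀..τ, F s with hV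
    set K : ℝ := Fp t + D * V t with hK
    -- pointwise lower bound for Fm on [t₀, t]
    have hL : ∀ τ, t₀ ≤ τ → τ ≤ t → K - C * (t - τ) - D * V τ ≤ Fm τ := by
      intro τ h1 h2
      have hτ0 : 0 < τ := lt_of_lt_of_le ht₀ h1
      have hadd : V τ + ∫ s in τ..t, F s = V t :=
        intervalIntegral.integral_add_adjacent_intervals (hloc t₀ τ ht₀ h1) (hloc τ t hτ0 h2)
      have h3 := hineq τ t hτ0 h2
      have hint : (∫ s in τ..t, F s) = V t - V τ := by linarith
      rw [hint] at h3
      rw [hK]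
      linarith
    -- left derivative of V
    have hVd : ∀ τ, t₀ < τ → HasDerivWithinAt V (Fm τ) (Iic τ) τ := by
      intro τ h1
      have hτ0 : 0 < τ := lt_trans ht₀ h1
      rw [hV]
      apply intervalIntegral.integral_hasDerivWithinAt_of_tendsto_ae_right
        (hloc t₀ τ ht₀ h1.le)
      · refine ⟨Ioc t₀ τ, ?_, (hloc t₀ τ ht₀ h1.le).1.aestronglyMeasurable⟩
        refine mem_nhdsWithin.mpr ⟨Ioi t₀, isOpen_Ioi, h1, ?_⟩
        intro x hx; exact ⟨hx.1, hx.2⟩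
      · refine (hFm τ hτ0).mono_left ?_
        calc 𝓝[Iic τ] τ ⊓ ae volume
            ≤ 𝓝[Iic τ] τ ⊓ 𝓟 {τ}ᶜ := inf_le_inf_left _
              (le_principal_iff.mpr (compl_mem_ae_iff.mpr (measure_singleton τ)))
          _ = 𝓝[Iic τ ∩ {τ}ᶜ] τ := (nhdsWithin_inter' τ _ _).symm
          _ = 𝓝[Iio τ] τ := by
              congr 1
              ext x
              simp [lt_iff_le_and_ne]
    -- continuity of V on [t₀, t]
    have hVc : ContinuousOn V (Icc t₀ t) := by
      rw [hV]
      have := intervalIntegral.continuousOn_primitive_interval'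
        (μ := volume) (hloc t₀ t ht₀ ht) left_mem_uIcc
      rwa [uIcc_of_le ht] at this
    -- exponential auxiliary functions
    have he : ∀ τ : ℝ, HasDerivAt (fun x : ℝ => Real.exp (D * x)) (D * Real.exp (D * τ)) τ := by
      intro τ
      have h1 : HasDerivAt (fun x : ℝ => D * x) D τ := by
        simpa using (hasDerivAt_id τ).const_mul D
      exact ((Real.hasDerivAt_exp (D * τ)).comp τ h1).congr_deriv (mul_comm _ _)
    set g : ℝ → ℝ := fun τ => Real.exp (D * τ) * V τ with hg
    set Bt : ℝ → ℝ := fun τ =>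
      D * Real.exp (D * τ) * (K - C * t + C * τ) - C * Real.exp (D * τ) with hBtdef
    have hBt : ∀ τ : ℝ, HasDerivAt Bt (D ^ 2 * Real.exp (D * τ) * (K - C * t + C * τ)) τ := by
      intro τ
      have hlin : HasDerivAt (fun x : ℝ => K - C * t + C * x) C τ := by
        simpa using ((hasDerivAt_id τ).const_mul C).const_add (K - C * t)
      have h1 := (((he τ).const_mul D).mul hlin).sub ((he τ).const_mul C)
      rw [hBtdef]
      refine h1.congr_deriv ?_
      ring
    -- the Gronwall comparison on the reflected interval
    have hmain : Bt t - Bt t₀ ≤ D ^ 2 * g t := by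
      have hrc : Continuous fun s : ℝ => t + t₀ - s := by continuity
      have hBtc : Continuous Bt := by rw [hBtdef]; fun_prop
      have hgc : ContinuousOn g (Icc t₀ t) := by
        rw [hg]
        exact (Real.continuous_exp.comp (continuous_const.mul continuous_id)).continuousOn.mul hVc
      have hfc : ContinuousOn (fun s => D ^ 2 * g (t + t₀ - s) - Bt (t + t₀ - s))
          (Icc t₀ t) := by
        have hcomp : ContinuousOn (fun s => g (t + t₀ - s)) (Icc t₀ t) := by
          apply ContinuousOn.comp hgc hrc.continuousOn
          intro x hx
          simp only [mem_Icc] at hx ⊢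
          constructor <;> linarith [hx.1, hx.2]
        exact (continuousOn_const.mul hcomp).sub (hBtc.comp hrc).continuousOn
      have hf' : ∀ s ∈ Ico t₀ t, HasDerivWithinAt
          (fun s => D ^ 2 * g (t + t₀ - s) - Bt (t + t₀ - s))
          (D ^ 2 * Real.exp (D * (t + t₀ - s)) * ((K - C * t + C * (t + t₀ - s))
            - D * V (t + t₀ - s) - Fm (t + t₀ - s))) (Ici s) s := by
        intro s hs
        have hτ1 : t₀ < t + t₀ - s := by
          have := hs.2; simp only [mem_Ico] at hs; linarith [hs.2]
        have hr : HasDerivWithinAt (fun s : ℝ => t + t₀ - s) (-1) (Ici s) s := by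
          simpa using ((hasDerivAt_id s).const_sub (t + t₀)).hasDerivWithinAt (s := Ici s)
        have hmaps : MapsTo (fun s : ℝ => t + t₀ - s) (Ici s) (Iic (t + t₀ - s)) := by
          intro x hx
          simp only [mem_Iic]
          have : s ≤ x := hx
          linarith
        have hgd : HasDerivWithinAt g
            (D * Real.exp (D * (t + t₀ - s)) * V (t + t₀ - s)
              + Real.exp (D * (t + t₀ - s)) * Fm (t + t₀ - s)) (Iic (t + t₀ - s)) (t + t₀ - s) := by
          rw [hg]
          exact (he (t + t₀ - s)).hasDerivWithinAt.mul (hVd _ hτ1)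
        have hcomp1 := (hgd.comp (x := s) hr hmaps).const_mul (D ^ 2)
        have hcomp2 := (hBt (t + t₀ - s)).hasDerivWithinAt.comp (x := s) hr hmaps
        have hsub := hcomp1.sub hcomp2
        refine hsub.congr_deriv ?_
        ring
      have himg := image_le_of_deriv_right_le_deriv_boundary
        (B := fun _ => D ^ 2 * g (t + t₀ - t₀) - Bt (t + t₀ - t₀)) (B' := fun _ => 0)
        hfc hf' le_rfl continuousOn_const
        (fun x _ => hasDerivWithinAt_const x (Ici x) _)
        (fun s hs => by
          have h1 : t₀ ≤ t + t₀ - s := by simp only [mem_Ico] at hs; linarith [hs.2]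
          have h2 : t + t₀ - s ≤ t := by simp only [mem_Ico] at hs; linarith [hs.1]
          have h3 := hL (t + t₀ - s) h1 h2
          have h5 := mul_le_mul_of_nonneg_left h3
            (le_of_lt (show (0:ℝ) < D ^ 2 * Real.exp (D * (t + t₀ - s)) by positivity))
          have h6 : D ^ 2 * Real.exp (D * (t + t₀ - s)) * (K - C * t + C * (t + t₀ - s)
              - D * V (t + t₀ - s) - Fm (t + t₀ - s)) ≤ 0 := by linarith [h5]
          exact h6)
      have hft := himg (right_mem_Icc.mpr ht)
      have e1 : t + t₀ - t = t₀ := by ring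
      have e2 : t + t₀ - t₀ = t := by ring
      rw [e1, e2] at hft
      have hV0 : V t₀ = 0 := by rw [hV]; exact intervalIntegral.integral_same
      have hg0 : g t₀ = 0 := by rw [hg]; simp [hV0]
      have hg0' : D ^ 2 * g t₀ = 0 := by rw [hg0]; ring
      linarith [hft, hg0']
    -- final algebra
    have hiiV : Fp t + D * V t ≤ Fm t₀ + C * (t - t₀) := by
      have := hineq t₀ t ht₀ ht
      rw [hV]
      exact this
    have hEpos : 0 < Real.exp (D * t) := Real.exp_pos _
    have hE0pos : 0 < Real.exp (D * t₀) := Real.exp_pos _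
    have hexp : Real.exp (-D * (t - t₀)) = Real.exp (D * t₀) / Real.exp (D * t) := by
      rw [← Real.exp_sub]
      ring_nf
    have hmain2 : D * Real.exp (D * t) * (Fp t + D * V t) - C * Real.exp (D * t)
        - (D * Real.exp (D * t₀) * (Fp t + D * V t - C * t + C * t₀)
          - C * Real.exp (D * t₀))
        ≤ D ^ 2 * (Real.exp (D * t) * V t) := by
      have h := hmain
      rw [hBtdef, hg, hK] at h
      simp only at h
      linarith [h]
    have h2' : D * Real.exp (D * t₀) * (Fp t + D * V t)
        ≤ D * Real.exp (D * t₀) * (Fm t₀ + C * (t - t₀)) :=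
      mul_le_mul_of_nonneg_left hiiV (by positivity)
    rw [hexp, show Real.exp (D * t₀) / Real.exp (D * t) * (Fm t₀ - C / D) + C / D
        = (D * Real.exp (D * t₀) * Fm t₀ + C * Real.exp (D * t)
            - C * Real.exp (D * t₀)) / (D * Real.exp (D * t)) by
          field_simp
          ring]
    rw [le_div_iff₀ (by positivity)]
    nlinarith [hmain2, h2']
  -- Step 4: bound for Fm t, 0 < t₀ < t
  have keym : ∀ t₀ t : ℝ, 0 < t₀ → t₀ < t →
      Fm t ≤ Real.exp (-D * (t - t₀)) * (Fm t₀ - C / D) + C / D := by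
    intro t₀ t ht₀ ht
    refine le_of_tendsto_of_tendsto (f := Fp)
      (g := fun t' => Real.exp (-D * (t' - t₀)) * (Fm t₀ - C / D) + C / D)
      (hFpFm t (lt_trans ht₀ ht)) ?_ ?_
    · have hc : Continuous fun t' : ℝ => Real.exp (-D * (t' - t₀)) * (Fm t₀ - C / D) + C / D := by
        fun_prop
      exact (hc.tendsto t).mono_left nhdsWithin_le_nhds
    · filter_upwards [Ioo_mem_nhdsLT ht] with t' ht'
      exact key t₀ t' ht₀ ht'.1.le
  -- Step 5: let t₀ → 0⁺
  intro t ht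
  constructor
  · have h1 : Tendsto (fun t₀ : ℝ => Real.exp (-D * (t - t₀)) * (Fm t₀ - C / D) + C / D)
        (𝓝[>] (0:ℝ)) (𝓝 (Real.exp (-D * (t - 0)) * (Fp 0 - C / D) + C / D)) := by
      apply Tendsto.add _ tendsto_const_nhds
      apply Tendsto.mul
      · exact (((Real.continuous_exp.comp (by fun_prop)).tendsto 0).mono_left
          nhdsWithin_le_nhds)
      · exact hFm0.sub tendsto_const_nhds
    have hev : ∀ᶠ t₀ in 𝓝[>] (0:ℝ),
        Fm t ≤ Real.exp (-D * (t - t₀)) * (Fm t₀ - C / D) + C / D := by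
      filter_upwards [Ioo_mem_nhdsGT ht] with t₀ ht₀
      exact keym t₀ t ht₀.1 ht₀.2
    have := ge_of_tendsto h1 hev
    simpa using this
  · have h1 : Tendsto (fun t₀ : ℝ => Real.exp (-D * (t - t₀)) * (Fm t₀ - C / D) + C / D)
        (𝓝[>] (0:ℝ)) (𝓝 (Real.exp (-D * (t - 0)) * (Fp 0 - C / D) + C / D)) := by
      apply Tendsto.add _ tendsto_const_nhds
      apply Tendsto.mul
      · exact (((Real.continuous_exp.comp (by fun_prop)).tendsto 0).mono_left
          nhdsWithin_le_nhds)
      · exact hFm0.sub tendsto_const_nhds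
    have hev : ∀ᶠ t₀ in 𝓝[>] (0:ℝ),
        Fp t ≤ Real.exp (-D * (t - t₀)) * (Fm t₀ - C / D) + C / D := by
      filter_upwards [Ioo_mem_nhdsGT ht] with t₀ ht₀
      exact key t₀ t ht₀.1 ht₀.2.le
    have := ge_of_tendsto h1 hev
    simpa using this
end

section
/- Let D > 0 and C ∈ ℝ. Let F : (0,∞) → ℝ be locally integrable and possess a one-sided limit F(t−) from the left and F(t+) from the right at every t > 0, and assume that F(τ₂+) + D ∫_{τ₁}^{τ₂} F(t) dt ≤ F(τ₁−) + C·(τ₂ − τ₁) holds for all 0 < τ₁ ≤ τ₂. Then the function t ↦ exp(D t)·(F(t) − C/D) is non-increasing on (0,∞) in the sense that exp(D τ₂)·(F(τ₂+) − C/D) ≤ exp(D τ₁)·(F(τ₁−) − C/D) for all 0 < τ₁ ≤ τ₂. -/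
open MeasureTheory Filter Set

/-- If `F` is locally integrable on `(0,∞)`, possesses one-sided limits `Fm t` (from the
left) and `Fp t` (from the right) at every `t > 0`, and satisfies
`F(τ₂+) + D ∫_{τ₁}^{τ₂} F ≤ F(τ₁−) + C (τ₂ − τ₁)` for all `0 < τ₁ ≤ τ₂`, then the function
`t ↦ exp(Dt) (F(t) − C/D)` is non-increasing on `(0,∞)`, in the sense that
`exp(Dτ₂) (F(τ₂+) − C/D) ≤ exp(Dτ₁) (F(τ₁−) − C/D)` for all `0 < τ₁ ≤ τ₂`. -/
theorem stmt_1 (D C : ℝ) (hD : 0 < D) (F Fm Fp : ℝ → ℝ)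
    (hloc : ∀ a b : ℝ, 0 < a → a ≤ b → IntervalIntegrable F volume a b)
    (hFm : ∀ t : ℝ, 0 < t → Tendsto F (nhdsWithin t (Iio t)) (nhds (Fm t)))
    (hFp : ∀ t : ℝ, 0 < t → Tendsto F (nhdsWithin t (Ioi t)) (nhds (Fp t)))
    (hineq : ∀ τ₁ τ₂ : ℝ, 0 < τ₁ → τ₁ ≤ τ₂ →
      Fp τ₂ + D * ∫ t in τ₁..τ₂, F t ≤ Fm τ₁ + C * (τ₂ - τ₁)) :
    ∀ τ₁ τ₂ : ℝ, 0 < τ₁ → τ₁ ≤ τ₂ →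
      Real.exp (D * τ₂) * (Fp τ₂ - C / D) ≤ Real.exp (D * τ₁) * (Fm τ₁ - C / D) := by
  intro τ₁ τ₂ h1 h12
  have h2 : (0:ℝ) < τ₂ := lt_of_lt_of_le h1 h12
  set u : ℝ → ℝ := fun s => ∫ t in τ₁..s, F t with hu_def
  set K : ℝ := Fp τ₂ - C / D with hK
  set c₀ : ℝ := K + D * u τ₂ - C * τ₂ with hc₀
  set ψ : ℝ → ℝ := fun s => Real.exp (D * s) * (D * u s - C * s - c₀) with hψ
  -- integrability facts
  have hint : ∀ s ∈ Icc τ₁ τ₂, IntervalIntegrable F volume τ₁ s := fun s hs =>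
    hloc τ₁ s h1 hs.1
  -- key pointwise inequality from the hypothesis
  have key : ∀ s ∈ Icc τ₁ τ₂, K + D * u τ₂ - C * τ₂ + C * s + C / D ≤ Fm s + D * u s := by
    intro s hs
    have hs0 : 0 < s := lt_of_lt_of_le h1 hs.1
    have h := hineq s τ₂ hs0 hs.2
    have hsub : u τ₂ - u s = ∫ t in s..τ₂, F t :=
      intervalIntegral.integral_interval_sub_left (hloc τ₁ τ₂ h1 h12) (hint s hs)
    have hDC : D * (C / D) = C := by field_simp
    nlinarith [h, hsub]
  -- continuity of u on [τ₁, τ₂]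
  have hu_cont : ContinuousOn u (Icc τ₁ τ₂) := by
    have := intervalIntegral.continuousOn_primitive_interval'
      (μ := volume) (f := F) (b₁ := τ₁) (b₂ := τ₂) (a := τ₁)
      (hloc τ₁ τ₂ h1 h12) (by rw [uIcc_of_le h12]; exact left_mem_Icc.2 h12)
    rwa [uIcc_of_le h12] at this
  have hψ_cont : ContinuousOn ψ (Icc τ₁ τ₂) := by
    apply ContinuousOn.mul
    · exact (Real.continuous_exp.comp (continuous_const.mul continuous_id)).continuousOn
    · exact ((continuousOn_const.mul hu_cont).sub
        (continuousOn_const.mul continuousOn_id)).sub continuousOn_const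
  -- left derivative of u
  have hu_deriv : ∀ s ∈ Ioc τ₁ τ₂, HasDerivWithinAt u (Fm s) (Iic s) s := by
    intro s hs
    have hs0 : 0 < s := lt_trans h1 hs.1
    have hInt : IntervalIntegrable F volume τ₁ s := hint s ⟨le_of_lt hs.1, hs.2⟩
    have hmeas : StronglyMeasurableAtFilter F (nhdsWithin s (Iic s)) volume := by
      refine ⟨Ioc (s/2) s, ?_, (hloc (s/2) s (by linarith) (by linarith)).1.aestronglyMeasurable⟩
      have : Ioc (s/2) s = Iic s ∩ Ioi (s/2) := by ext x; simp [and_comm]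
      rw [this]
      exact inter_mem_nhdsWithin _ (Ioi_mem_nhds (half_lt_self hs0))
    have hlim : Tendsto F (nhdsWithin s (Iic s) ⊓ ae volume) (nhds (Fm s)) := by
      refine (hFm s hs0).mono_left ?_
      have h1' : (ae (volume : Measure ℝ)) ≤ Filter.principal ({s}ᶜ) :=
        le_principal_iff.2 (compl_mem_ae_iff.2 (measure_singleton s))
      calc nhdsWithin s (Iic s) ⊓ ae volume
          ≤ nhdsWithin s (Iic s) ⊓ Filter.principal ({s}ᶜ) := inf_le_inf_left _ h1'
        _ = nhdsWithin s (Iic s ∩ {s}ᶜ) := (nhdsWithin_inter' s _ _).symm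
        _ = nhdsWithin s (Iio s) := by
            congr 1; ext x; simp [lt_iff_le_and_ne]
    exact intervalIntegral.integral_hasDerivWithinAt_of_tendsto_ae_right hInt hmeas hlim
  -- left derivative of ψ is nonnegative
  have hψ_deriv : ∀ s ∈ Ioc τ₁ τ₂, ∃ L : ℝ, 0 ≤ L ∧ HasDerivWithinAt ψ L (Iic s) s := by
    intro s hs
    have hs' : s ∈ Icc τ₁ τ₂ := ⟨le_of_lt hs.1, hs.2⟩
    refine ⟨Real.exp (D * s) * D * (D * u s - C * s - c₀) +
      Real.exp (D * s) * (D * Fm s - C), ?_, ?_⟩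
    · have hk := key s hs'
      have hDC : D * (C / D) = C := by field_simp
      have hexp : 0 < Real.exp (D * s) := Real.exp_pos _
      have hEq : Real.exp (D * s) * D * (D * u s - C * s - c₀) +
          Real.exp (D * s) * (D * Fm s - C) =
          Real.exp (D * s) * D * ((D * u s - C * s - c₀) + (Fm s - C / D)) := by
        have : D * Fm s - C = D * (Fm s - C / D) := by rw [mul_sub, hDC]
        rw [this]; ring
      rw [hEq]
      exact mul_nonneg (mul_pos hexp hD).le (by rw [hc₀]; linarith [hk])
    · have hexp : HasDerivWithinAt (fun x => Real.exp (D * x)) (Real.exp (D * s) * D)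
          (Iic s) s := by
        have h0 : HasDerivAt (fun x => Real.exp (D * x)) (Real.exp (D * s) * D) s := by
          simpa using ((hasDerivAt_id s).const_mul D).exp
        exact h0.hasDerivWithinAt
      have hinner : HasDerivWithinAt (fun x => D * u x - C * x - c₀) (D * Fm s - C)
          (Iic s) s := by
        have h1' : HasDerivWithinAt (fun x => C * x) C (Iic s) s := by
          simpa using (((hasDerivAt_id s).const_mul C).hasDerivWithinAt (s := Iic s))
        exact (((hu_deriv s hs).const_mul D).sub h1').sub_const c₀
      exact hexp.mul hinner
  -- reflected function has nonpositive right derivative, apply fencing theorem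
  have main : ψ τ₁ ≤ ψ τ₂ := by
    set η : ℝ → ℝ := fun r => ψ (τ₁ + τ₂ - r) with hη
    have hrefl : MapsTo (fun r => τ₁ + τ₂ - r) (Icc τ₁ τ₂) (Icc τ₁ τ₂) := by
      intro r hr; constructor <;> simp at hr ⊢ <;> linarith [hr.1, hr.2]
    have hη_cont : ContinuousOn η (Icc τ₁ τ₂) :=
      hψ_cont.comp ((continuous_const.sub continuous_id).continuousOn) hrefl
    have hη_deriv : ∀ r ∈ Ico τ₁ τ₂, ∃ L : ℝ, 0 ≤ L ∧
        HasDerivWithinAt η (-L) (Ici r) r := by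
      intro r hr
      have hsIoc : τ₁ + τ₂ - r ∈ Ioc τ₁ τ₂ := by
        constructor <;> simp at hr ⊢ <;> linarith [hr.1, hr.2]
      obtain ⟨L, hL0, hL⟩ := hψ_deriv _ hsIoc
      refine ⟨L, hL0, ?_⟩
      have hg : HasDerivWithinAt (fun r : ℝ => τ₁ + τ₂ - r) (-1) (Ici r) r :=
        ((hasDerivAt_id r).const_sub (τ₁ + τ₂)).hasDerivWithinAt
      have hmaps : MapsTo (fun r : ℝ => τ₁ + τ₂ - r) (Ici r) (Iic (τ₁ + τ₂ - r)) := by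
        intro x hx; simp at hx ⊢; linarith
      have := hL.comp r hg hmaps
      rw [mul_neg, mul_one] at this
      exact this
    classical
    -- choose derivative function
    choose! L hL0 hLd using hη_deriv
    have := image_le_of_deriv_right_le_deriv_boundary (f := η) (f' := fun r => -(L r))
      hη_cont (fun x hx => hLd x hx) (le_refl (η τ₁))
      (B := fun _ => η τ₁) (B' := fun _ => 0) continuousOn_const
      (fun x _ => hasDerivWithinAt_const _ _ _)
      (fun x hx => neg_nonpos.2 (hL0 x hx))
    have hend := this (right_mem_Icc.2 h12)
    simpa [hη] using hend
  -- unfold ψ at the endpoints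
  have huτ₁ : u τ₁ = 0 := intervalIntegral.integral_same
  have hψ₁ : ψ τ₁ = Real.exp (D * τ₁) * (C * τ₂ - C * τ₁ - K - D * u τ₂) := by
    rw [hψ]; simp only [huτ₁, hc₀]; ring
  have hψ₂ : ψ τ₂ = -(Real.exp (D * τ₂) * K) := by
    rw [hψ]; simp only [hc₀]; ring
  rw [hψ₁, hψ₂] at main
  -- final comparison using hineq at (τ₁, τ₂)
  have hfin := hineq τ₁ τ₂ h1 h12
  have hu2 : u τ₂ = ∫ t in τ₁..τ₂, F t := rfl
  clear_value ψ c₀ K u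
  have hexp1 : (0:ℝ) < Real.exp (D * τ₁) := Real.exp_pos _
  have h3 : K + D * u τ₂ - C * τ₂ + C * τ₁ ≤ Fm τ₁ - C / D := by
    rw [hK, hu2]; linarith
  have h4 : Real.exp (D * τ₁) * (K + D * u τ₂ - C * τ₂ + C * τ₁) ≤
      Real.exp (D * τ₁) * (Fm τ₁ - C / D) :=
    mul_le_mul_of_nonneg_left h3 hexp1.le
  have hgoal : Real.exp (D * τ₂) * K ≤ Real.exp (D * τ₁) * (Fm τ₁ - C / D) := by
    linarith [main, h4]
  rw [hK] at hgoal
  linarith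
end

section
/- Let θ > 0, q > 0 and D̄ ≥ 0. Let D : ℝ → ℝ be measurable with 0 ≤ D(t) ≤ D̄ for all t ∈ ℝ, and assume that D(t₂) + θ ∫_{t₁}^{t₂} D(s)^q ds ≤ D(t₁) holds for all real t₁ ≤ t₂. Then D(t) = 0 for every t ∈ ℝ. -/
open MeasureTheory Filter Set

/-- Oscillation-defect decay: a measurable function `0 ≤ D ≤ D̄` on the whole real line
satisfying `D(t₂) + θ ∫_{t₁}^{t₂} D(s)^q ds ≤ D(t₁)` for all `t₁ ≤ t₂` vanishes
identically. -/
theorem stmt_2 (θ q Dbar : ℝ) (hθ : 0 < θ) (hq : 0 < q) (hDbar : 0 ≤ Dbar)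
    (D : ℝ → ℝ) (hmeas : Measurable D)
    (hbdd : ∀ t : ℝ, 0 ≤ D t ∧ D t ≤ Dbar)
    (hineq : ∀ t₁ t₂ : ℝ, t₁ ≤ t₂ → D t₂ + θ * ∫ s in t₁..t₂, (D s) ^ q ≤ D t₁) :
    ∀ t : ℝ, D t = 0 := by
  -- integrability of D^q on any interval
  have hint : ∀ a b : ℝ, a ≤ b → IntervalIntegrable (fun s => D s ^ q) volume a b := by
    intro a b hab
    rw [intervalIntegrable_iff_integrableOn_Ioc_of_le hab]
    apply (integrable_const (Dbar ^ q)).mono'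
    · apply Measurable.aestronglyMeasurable; measurability
    · filter_upwards with s
      rw [Real.norm_eq_abs, abs_of_nonneg (Real.rpow_nonneg (hbdd s).1 q)]
      exact Real.rpow_le_rpow (hbdd s).1 (hbdd s).2 hq.le
  -- D is antitone
  have hanti : ∀ a b : ℝ, a ≤ b → D b ≤ D a := by
    intro a b hab
    have h := hineq a b hab
    have hnn : 0 ≤ ∫ s in a..b, (D s) ^ q :=
      intervalIntegral.integral_nonneg hab (fun s _ => Real.rpow_nonneg (hbdd s).1 q)
    nlinarith
  intro t
  by_contra hne
  have hc : 0 < D t := lt_of_le_of_ne (hbdd t).1 (Ne.symm hne)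
  set c := D t with hcdef
  have hcq : 0 < c ^ q := Real.rpow_pos_of_pos hc q
  set t₁ : ℝ := t - (Dbar + 1) / (θ * c ^ q) with ht₁
  have hpos : 0 < (Dbar + 1) / (θ * c ^ q) := by positivity
  have hle : t₁ ≤ t := by simp [ht₁]; linarith
  -- lower bound on the integral
  have hlow : (t - t₁) * c ^ q ≤ ∫ s in t₁..t, (D s) ^ q := by
    have : ∫ s in t₁..t, c ^ q ≤ ∫ s in t₁..t, (D s) ^ q := by
      apply intervalIntegral.integral_mono_on hle intervalIntegrable_const (hint t₁ t hle)
      intro s hs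
      exact Real.rpow_le_rpow (hbdd t).1 (hanti s t hs.2) hq.le
    simpa using this
  have h := hineq t₁ t hle
  have hub : D t₁ ≤ Dbar := (hbdd t₁).2
  have hDt : 0 ≤ D t := (hbdd t).1
  have key : θ * ((t - t₁) * c ^ q) ≤ Dbar := by nlinarith
  have : t - t₁ = (Dbar + 1) / (θ * c ^ q) := by simp [ht₁]
  rw [this] at key
  have hne' : θ * c ^ q ≠ 0 := by positivity
  have : θ * ((Dbar + 1) / (θ * c ^ q) * c ^ q) = Dbar + 1 := by
    field_simp
  rw [this] at key
  linarith
end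

section
/- Let 0 < ρ* < ρ̄, β > 1 and p̄ > 0, and let p : [0, ρ̄) → [0, ∞) be continuous with (ρ̄ − ρ)^β · p(ρ) → p̄ as ρ → ρ̄ from the left. Define the pressure potential P(ρ) = ρ ∫_{ρ*}^{ρ} p(z)/z² dz for ρ ∈ (0, ρ̄). Then there exists a constant c > 0 such that (ρ̄ − ρ)^{1−β} ≤ c·(1 + P(ρ)) for all ρ ∈ [ρ*, ρ̄). -/
open MeasureTheory Filter Set

/-- Hard-sphere singularity lower bound for the pressure potential: if `p ≥ 0` is
continuous on `[0, ρ̄)` and `(ρ̄ − ρ)^β p(ρ) → p̄ > 0` as `ρ → ρ̄−` with `β > 1`, then the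
pressure potential `P(ρ) = ρ ∫_{ρ*}^{ρ} p(z)/z² dz` satisfies
`(ρ̄ − ρ)^{1−β} ≤ c (1 + P(ρ))` on `[ρ*, ρ̄)` for some constant `c > 0`. -/
theorem stmt_6 (ρstar ρbar β pbar : ℝ) (h0 : 0 < ρstar) (h1 : ρstar < ρbar)
    (hβ : 1 < β) (hpbar : 0 < pbar) (p : ℝ → ℝ)
    (hp : ContinuousOn p (Set.Ico 0 ρbar))
    (hpos : ∀ z ∈ Set.Ico (0 : ℝ) ρbar, 0 ≤ p z)
    (hsing : Tendsto (fun ρ : ℝ => (ρbar - ρ) ^ β * p ρ)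
      (nhdsWithin ρbar (Set.Iio ρbar)) (nhds pbar)) :
    ∃ c > 0, ∀ ρ ∈ Set.Ico ρstar ρbar,
      (ρbar - ρ) ^ (1 - β) ≤ c * (1 + ρ * ∫ z in ρstar..ρ, p z / z ^ 2) := by
  have h2 : (0:ℝ) < ρbar := h0.trans h1
  -- Step 1: find ρ₀ ∈ (ρstar, ρbar) with the near-singularity lower bound on p
  have hev : ∀ᶠ ρ in nhdsWithin ρbar (Set.Iio ρbar), pbar/2 < (ρbar - ρ) ^ β * p ρ :=
    hsing.eventually (eventually_gt_nhds (half_lt_self hpbar))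
  rw [eventually_iff, mem_nhdsLT_iff_exists_Ioo_subset] at hev
  obtain ⟨l, hl, hsub⟩ := hev
  set ρ₀ : ℝ := (max ρstar l + ρbar)/2 with hρ₀def
  have hmax : max ρstar l < ρbar := max_lt h1 hl
  have hρ₀lt : ρ₀ < ρbar := by rw [hρ₀def]; linarith
  have hρ₀gt : ρstar < ρ₀ := by
    have := le_max_left ρstar l
    rw [hρ₀def]; linarith
  have hlρ₀ : l < ρ₀ := by
    have := le_max_right ρstar l
    rw [hρ₀def]; linarith
  have hρ₀pos : 0 < ρ₀ := h0.trans hρ₀gt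
  have key : ∀ z ∈ Set.Ico ρ₀ ρbar, (pbar/2) * (ρbar - z) ^ (-β) ≤ p z := by
    intro z hz
    have h3 : 0 < ρbar - z := sub_pos.mpr hz.2
    have hmem : pbar/2 < (ρbar - z) ^ β * p z := hsub ⟨lt_of_lt_of_le hlρ₀ hz.1, hz.2⟩
    have e : (ρbar - z) ^ β * (ρbar - z) ^ (-β) = 1 := by
      rw [← Real.rpow_add h3]; simp
    calc (pbar/2) * (ρbar - z) ^ (-β)
        ≤ ((ρbar - z) ^ β * p z) * (ρbar - z) ^ (-β) :=
          mul_le_mul_of_nonneg_right hmem.le (Real.rpow_nonneg h3.le _)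
      _ = p z := by rw [mul_right_comm, e, one_mul]
  -- integrability of the integrand on subintervals of [ρstar, ρbar)
  have hint : ∀ a b : ℝ, ρstar ≤ a → a ≤ b → b < ρbar →
      IntervalIntegrable (fun z => p z / z ^ 2) volume a b := by
    intro a b ha hab hb
    apply ContinuousOn.intervalIntegrable
    have hsub2 : Set.uIcc a b ⊆ Set.Ico 0 ρbar := by
      rw [Set.uIcc_of_le hab]
      intro z hz
      exact ⟨le_trans (le_trans h0.le ha) hz.1, lt_of_le_of_lt hz.2 hb⟩
    refine ((hp.mono hsub2).div ((continuous_pow 2).continuousOn) ?_)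
    intro z hz
    rw [Set.uIcc_of_le hab] at hz
    exact pow_ne_zero 2 (ne_of_gt (lt_of_lt_of_le (h0.trans_le ha) hz.1))
  -- nonnegativity of the integral
  have hInn : ∀ ρ ∈ Set.Ico ρstar ρbar, 0 ≤ ∫ z in ρstar..ρ, p z / z ^ 2 := by
    intro ρ hρ
    refine intervalIntegral.integral_nonneg hρ.1 ?_
    intro z hz
    exact div_nonneg (hpos z ⟨le_trans h0.le (le_trans hz.1 le_rfl) |>.trans le_rfl |>.trans le_rfl
      |>.trans le_rfl, lt_of_le_of_lt hz.2 hρ.2⟩) (sq_nonneg z)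
  set C₀ : ℝ := (ρbar - ρ₀) ^ (1 - β) with hC₀def
  have hC₀pos : 0 < C₀ := Real.rpow_pos_of_pos (sub_pos.mpr hρ₀lt) _
  set K : ℝ := 2 * ρbar ^ 2 * (β - 1) / (ρstar * pbar) with hKdef
  have hβ1 : (0:ℝ) < β - 1 := by linarith
  have hKpos : 0 < K := by
    apply div_pos
    · positivity
    · positivity
  -- main claim
  have claim : ∀ ρ ∈ Set.Ico ρstar ρbar,
      (ρbar - ρ) ^ (1 - β) ≤ K * (ρ * ∫ z in ρstar..ρ, p z / z ^ 2) + C₀ := by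
    intro ρ hρ
    have hIρ := hInn ρ hρ
    have hPnn : 0 ≤ ρ * ∫ z in ρstar..ρ, p z / z ^ 2 :=
      mul_nonneg (le_trans h0.le hρ.1) hIρ
    rcases lt_or_ge ρ ρ₀ with hcase | hcase
    · have : (ρbar - ρ) ^ (1 - β) ≤ C₀ := by
        apply Real.rpow_le_rpow_of_nonpos (sub_pos.mpr hρ₀lt) (by linarith) (by linarith)
      nlinarith
    · -- ρ₀ ≤ ρ < ρbar
      have hρlt : ρ < ρbar := hρ.2
      have hbρ : 0 < ρbar - ρ := sub_pos.mpr hρlt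
      set g : ℝ → ℝ := fun z => pbar / (2 * ρbar ^ 2) * (ρbar - z) ^ (-β) with hgdef
      have hgcont : ContinuousOn g (Set.uIcc ρ₀ ρ) := by
        apply ContinuousOn.mul continuousOn_const
        apply ContinuousOn.rpow_const
        · exact (continuous_const.sub continuous_id).continuousOn
        · intro x hx
          rw [Set.uIcc_of_le hcase] at hx
          exact Or.inl (ne_of_gt (sub_pos.mpr (lt_of_le_of_lt hx.2 hρlt)))
      have hgint : IntervalIntegrable g volume ρ₀ ρ := hgcont.intervalIntegrable
      have hfint : IntervalIntegrable (fun z => p z / z ^ 2) volume ρ₀ ρ :=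
        hint ρ₀ ρ hρ₀gt.le hcase hρlt
      have hmono : ∫ z in ρ₀..ρ, g z ≤ ∫ z in ρ₀..ρ, p z / z ^ 2 := by
        apply intervalIntegral.integral_mono_on hcase hgint hfint
        intro z hz
        have hz0 : 0 < z := hρ₀pos.trans_le hz.1
        have hzlt : z < ρbar := lt_of_le_of_lt hz.2 hρlt
        have hkey := key z ⟨hz.1, hzlt⟩
        have h4 : 0 ≤ (ρbar - z) ^ (-β) := Real.rpow_nonneg (sub_pos.mpr hzlt).le _
        show pbar / (2 * ρbar ^ 2) * (ρbar - z) ^ (-β) ≤ p z / z ^ 2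
        rw [show pbar / (2 * ρbar ^ 2) * (ρbar - z) ^ (-β)
            = (pbar / 2 * (ρbar - z) ^ (-β)) / ρbar ^ 2 by ring]
        apply div_le_div₀ (hpos z ⟨hz0.le, hzlt⟩) hkey (by positivity)
        nlinarith [hz0, hzlt]
      -- compute ∫ g
      have hcomp : ∫ z in ρ₀..ρ, (ρbar - z) ^ (-β)
          = ((ρbar - ρ₀) ^ (-β + 1) - (ρbar - ρ) ^ (-β + 1)) / (-β + 1) := by
        rw [intervalIntegral.integral_comp_sub_left (fun x => x ^ (-β)) ρbar]
        rw [integral_rpow]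
        right
        constructor
        · intro h; rw [neg_eq_iff_eq_neg] at h; linarith
        · rw [Set.uIcc_of_le (by linarith : ρbar - ρ ≤ ρbar - ρ₀)]
          intro h
          exact absurd h.1 (not_le.mpr hbρ)
      have hgval : ∫ z in ρ₀..ρ, g z
          = pbar / (2 * ρbar ^ 2) * (((ρbar - ρ) ^ (1 - β) - C₀) / (β - 1)) := by
        rw [hgdef, intervalIntegral.integral_const_mul, hcomp]
        congr 1
        rw [hC₀def, show (1 : ℝ) - β = -β + 1 by ring]
        rw [div_eq_div_iff (by intro h; linarith : -β + 1 ≠ 0) (by linarith : β - 1 ≠ 0)]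
        ring
      -- assemble
      set X : ℝ := (ρbar - ρ) ^ (1 - β) with hXdef
      set I : ℝ := ∫ z in ρstar..ρ, p z / z ^ 2 with hIdef
      have hsplit : (∫ z in ρstar..ρ₀, p z / z ^ 2) + ∫ z in ρ₀..ρ, p z / z ^ 2 = I := by
        rw [hIdef]
        exact intervalIntegral.integral_add_adjacent_intervals
          (hint ρstar ρ₀ le_rfl hρ₀gt.le hρ₀lt) hfint
      have hfirst : 0 ≤ ∫ z in ρstar..ρ₀, p z / z ^ 2 :=
        hInn ρ₀ ⟨hρ₀gt.le, hρ₀lt⟩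
      have hIlb : pbar / (2 * ρbar ^ 2) * ((X - C₀) / (β - 1)) ≤ I := by
        rw [← hsplit, ← hgval]
        linarith [hmono]
      -- multiply through
      have hmul : K * ρstar * (pbar / (2 * ρbar ^ 2) * ((X - C₀) / (β - 1))) = X - C₀ := by
        have hρs : ρstar ≠ 0 := ne_of_gt h0
        have hpb : pbar ≠ 0 := ne_of_gt hpbar
        have hρb : ρbar ≠ 0 := ne_of_gt h2
        have hb1 : β - 1 ≠ 0 := ne_of_gt hβ1
        rw [hKdef]
        field_simp
      have h5 : K * ρstar * (pbar / (2 * ρbar ^ 2) * ((X - C₀) / (β - 1))) ≤ K * ρstar * I :=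
        mul_le_mul_of_nonneg_left hIlb (by positivity)
      rw [hmul] at h5
      have h6 : K * ρstar * I ≤ K * (ρ * I) := by
        have : ρstar * I ≤ ρ * I := mul_le_mul_of_nonneg_right hρ.1 hIρ
        nlinarith
      linarith
  refine ⟨K + C₀, by positivity, ?_⟩
  intro ρ hρ
  have h7 := claim ρ hρ
  have hPnn : 0 ≤ ρ * ∫ z in ρstar..ρ, p z / z ^ 2 :=
    mul_nonneg (le_trans h0.le hρ.1) (hInn ρ hρ)
  nlinarith
end

section
/- Let ρ̄ > 0, β > 0, ω > 0 and p̄ > 0, and let p : [0, ρ̄) → [0, ∞) be continuous with (ρ̄ − ρ)^β · p(ρ) → p̄ as ρ → ρ̄ from the left. Then there exists a constant c > 0 such that p(ρ)^{(β+ω)/β} ≤ c·(1 + p(ρ)·(ρ̄ − ρ)^{−ω}) for all ρ ∈ [0, ρ̄). -/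
open Filter Set

/-- Pointwise higher-integrability bound for a hard-sphere pressure: if `p ≥ 0` is
continuous on `[0, ρ̄)` and `(ρ̄ − ρ)^β p(ρ) → p̄ > 0` as `ρ → ρ̄−`, then
`p(ρ)^{(β+ω)/β} ≤ c (1 + p(ρ) (ρ̄ − ρ)^{−ω})` on `[0, ρ̄)` for some constant `c > 0`. -/
theorem stmt_7 (ρbar β ω pbar : ℝ) (hρbar : 0 < ρbar) (hβ : 0 < β) (hω : 0 < ω)
    (hpbar : 0 < pbar) (p : ℝ → ℝ)
    (hp : ContinuousOn p (Set.Ico 0 ρbar))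
    (hpos : ∀ z ∈ Set.Ico (0 : ℝ) ρbar, 0 ≤ p z)
    (hsing : Tendsto (fun ρ : ℝ => (ρbar - ρ) ^ β * p ρ)
      (nhdsWithin ρbar (Set.Iio ρbar)) (nhds pbar)) :
    ∃ c > 0, ∀ ρ ∈ Set.Ico (0 : ℝ) ρbar,
      p ρ ^ ((β + ω) / β) ≤ c * (1 + p ρ * (ρbar - ρ) ^ (-ω)) := by
  have hβ' : β ≠ 0 := ne_of_gt hβ
  set q : ℝ := (β + ω) / β with hq
  have hq0 : 0 < q := div_pos (by linarith) hβ
  -- eventual bound near ρbar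
  have h2 : ∀ᶠ ρ in nhdsWithin ρbar (Set.Iio ρbar), (ρbar - ρ) ^ β * p ρ < 2 * pbar :=
    hsing.eventually_lt_const (by linarith)
  rw [eventually_nhdsWithin_iff, Metric.eventually_nhds_iff] at h2
  obtain ⟨ε, hε, hball⟩ := h2
  set δ : ℝ := min ε ρbar with hδdef
  have hδ : 0 < δ := lt_min hε hρbar
  have hδρ : δ ≤ ρbar := min_le_right _ _
  -- compact part
  have hKsub : Set.Icc (0 : ℝ) (ρbar - δ/2) ⊆ Set.Ico 0 ρbar := by
    intro x hx
    exact ⟨hx.1, lt_of_le_of_lt hx.2 (by linarith)⟩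
  obtain ⟨x0, hx0, hM⟩ := (isCompact_Icc).exists_isMaxOn
    ⟨0, by constructor <;> linarith⟩ (hp.mono hKsub)
  set M : ℝ := p x0 with hMdef
  have hM0 : 0 ≤ M := hpos x0 (hKsub hx0)
  set c : ℝ := (M + 1) ^ q + (2 * pbar) ^ (ω / β) with hc
  have hc1 : 0 < (M + 1) ^ q := Real.rpow_pos_of_pos (by linarith) q
  have hc2 : 0 ≤ (2 * pbar) ^ (ω / β) := Real.rpow_nonneg (by linarith) _
  refine ⟨c, by positivity, ?_⟩
  intro ρ hρ
  have hpρ : 0 ≤ p ρ := hpos ρ hρ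
  have ht : 0 < ρbar - ρ := by linarith [hρ.2]
  have hterm : 0 ≤ p ρ * (ρbar - ρ) ^ (-ω) :=
    mul_nonneg hpρ (Real.rpow_nonneg ht.le _)
  by_cases hcase : ρ ≤ ρbar - δ/2
  · -- compact part: p ρ ≤ M
    have hpM : p ρ ≤ M := hM ⟨hρ.1, hcase⟩
    have : p ρ ^ q ≤ (M + 1) ^ q :=
      Real.rpow_le_rpow hpρ (by linarith) hq0.le
    calc p ρ ^ q ≤ (M + 1) ^ q := this
      _ ≤ c * 1 := by rw [mul_one]; simp only [hc]; linarith
      _ ≤ c * (1 + p ρ * (ρbar - ρ) ^ (-ω)) := by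
          apply mul_le_mul_of_nonneg_left (by linarith) (by positivity)
  · -- singular part
    push_neg at hcase
    have hdist : dist ρ ρbar < ε := by
      rw [Real.dist_eq, abs_of_nonpos (by linarith [hρ.2])]
      have : δ ≤ ε := min_le_left _ _
      linarith
    have hb : (ρbar - ρ) ^ β * p ρ < 2 * pbar := hball hdist hρ.2
    rcases eq_or_lt_of_le hpρ with h0 | h0
    · rw [← h0, Real.zero_rpow (ne_of_gt hq0)]
      positivity
    · set t : ℝ := ρbar - ρ with htdef
      have htβ : 0 < t ^ β := Real.rpow_pos_of_pos ht β
      have hple : p ρ ≤ 2 * pbar * t ^ (-β) := by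
        rw [Real.rpow_neg ht.le]
        rw [mul_comm] at hb
        calc p ρ = p ρ * t ^ β * (t ^ β)⁻¹ := by field_simp
          _ ≤ 2 * pbar * (t ^ β)⁻¹ := by
              apply mul_le_mul_of_nonneg_right hb.le (by positivity)
      have hsplit : p ρ ^ q = p ρ * p ρ ^ (ω / β) := by
        have hq1 : q = 1 + ω / β := by rw [hq, add_div, div_self hβ']
        rw [hq1, Real.rpow_add h0, Real.rpow_one]
      have hpow : p ρ ^ (ω / β) ≤ (2 * pbar) ^ (ω / β) * t ^ (-ω) := by
        calc p ρ ^ (ω / β) ≤ (2 * pbar * t ^ (-β)) ^ (ω / β) :=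
              Real.rpow_le_rpow hpρ hple (by positivity)
          _ = (2 * pbar) ^ (ω / β) * (t ^ (-β)) ^ (ω / β) :=
              Real.mul_rpow (by linarith) (Real.rpow_nonneg ht.le _)
          _ = (2 * pbar) ^ (ω / β) * t ^ (-ω) := by
              rw [← Real.rpow_mul ht.le]
              congr 1
              field_simp
      calc p ρ ^ q = p ρ * p ρ ^ (ω / β) := hsplit
        _ ≤ p ρ * ((2 * pbar) ^ (ω / β) * t ^ (-ω)) :=
            mul_le_mul_of_nonneg_left hpow hpρ
        _ = (2 * pbar) ^ (ω / β) * (p ρ * t ^ (-ω)) := by ring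
        _ ≤ c * (1 + p ρ * t ^ (-ω)) := by
            apply mul_le_mul (by simp only [hc]; linarith) (by linarith) hterm (by positivity)
end

section
/- Let (Q, μ) be a measure space with total mass |Q| := μ(Q) satisfying 0 < |Q| < ∞, let ρ̄ > 0, δ > 0, and let p : [0, ρ̄) → [0, ∞) be nondecreasing. Let ρ : Q → [0, ρ̄) be measurable with p∘ρ integrable, set M = ∫_Q ρ dμ, and assume M/|Q| ≤ ρ̄ − δ. Put r = (M/|Q| + ρ̄)/2. Then ∫_Q p(ρ)·(ρ − M/|Q|) dμ ≥ (δ/2)·∫_Q p(ρ) dμ − |Q|·( r·p(r) + (δ/2)·p(r) ). -/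
open MeasureTheory Filter Set

/-- Lower bound on the mass-weighted pressure integral: on a finite measure space `Q`
of positive total mass `|Q|`, for a nondecreasing nonnegative pressure law `p` on
`[0, ρ̄)` and a density `0 ≤ ρ < ρ̄` of total mass `M = ∫ ρ` with `M/|Q| ≤ ρ̄ − δ`,
setting `r = (M/|Q| + ρ̄)/2` one has
`∫ p(ρ)(ρ − M/|Q|) ≥ (δ/2) ∫ p(ρ) − |Q| (r p(r) + (δ/2) p(r))`. -/
theorem stmt_8 {Q : Type*} [MeasurableSpace Q] (μ : Measure Q) [IsFiniteMeasure μ]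
    (hQ : 0 < (μ Set.univ).toReal)
    (ρbar δ : ℝ) (hρbar : 0 < ρbar) (hδ : 0 < δ) (p : ℝ → ℝ)
    (hpm : MonotoneOn p (Set.Ico 0 ρbar))
    (hpnn : ∀ z ∈ Set.Ico (0 : ℝ) ρbar, 0 ≤ p z)
    (ρ : Q → ℝ) (hρmeas : Measurable ρ)
    (hρb : ∀ x, ρ x ∈ Set.Ico (0 : ℝ) ρbar)
    (hint : Integrable (fun x => p (ρ x)) μ)
    (hM : (∫ x, ρ x ∂μ) / (μ Set.univ).toReal ≤ ρbar - δ) :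
    (δ / 2) * (∫ x, p (ρ x) ∂μ)
      - (μ Set.univ).toReal *
        (((∫ x, ρ x ∂μ) / (μ Set.univ).toReal + ρbar) / 2
            * p (((∫ x, ρ x ∂μ) / (μ Set.univ).toReal + ρbar) / 2)
          + (δ / 2) * p (((∫ x, ρ x ∂μ) / (μ Set.univ).toReal + ρbar) / 2))
      ≤ ∫ x, p (ρ x) * (ρ x - (∫ x, ρ x ∂μ) / (μ Set.univ).toReal) ∂μ := by
  set V := (μ Set.univ).toReal with hV
  set m := (∫ x, ρ x ∂μ) / V with hmdef
  set r := (m + ρbar) / 2 with hrdef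
  have hMnn : 0 ≤ ∫ x, ρ x ∂μ := integral_nonneg fun x => (hρb x).1
  have hm0 : 0 ≤ m := div_nonneg hMnn hQ.le
  have hr0 : 0 ≤ r := by rw [hrdef]; positivity
  have hrlt : r < ρbar := by rw [hrdef]; linarith
  have hrmem : r ∈ Set.Ico (0:ℝ) ρbar := ⟨hr0, hrlt⟩
  have hpr : 0 ≤ p r := hpnn r hrmem
  have key : ∀ x, (δ/2) * p (ρ x) - (r * p r + (δ/2) * p r) ≤ p (ρ x) * (ρ x - m) := by
    intro x
    have hp0 : 0 ≤ p (ρ x) := hpnn _ (hρb x)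
    rcases le_or_gt r (ρ x) with h | h
    · have h1 : δ/2 ≤ ρ x - m := by rw [hrdef] at h; linarith
      nlinarith [mul_le_mul_of_nonneg_left h1 hp0, mul_nonneg hr0 hpr,
        mul_nonneg hδ.le hpr]
    · have hple : p (ρ x) ≤ p r := hpm (hρb x) hrmem h.le
      have hmr : m ≤ r := by rw [hrdef]; linarith
      rcases le_or_gt m (ρ x) with h2 | h2
      · nlinarith [mul_nonneg hp0 (sub_nonneg.2 h2), mul_nonneg hr0 hpr,
          mul_nonneg hδ.le (sub_nonneg.2 hple)]
      · nlinarith [mul_nonneg (sub_nonneg.2 hple) (sub_nonneg.2 h2.le),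
          mul_nonneg hpr (hρb x).1, mul_le_mul_of_nonneg_left hmr hpr,
          mul_nonneg hδ.le (sub_nonneg.2 hple)]
  have hfint : Integrable (fun x => p (ρ x) * (ρ x - m)) μ := by
    have hb : Integrable (fun x => (ρ x - m) * p (ρ x)) μ := by
      apply hint.bdd_mul (c := ρbar + |m|) ((hρmeas.sub measurable_const).aestronglyMeasurable)
      refine ae_of_all _ fun x => ?_
      have := hρb x
      rw [Real.norm_eq_abs]
      show |ρ x - m| ≤ ρbar + |m|
      rcases abs_cases (ρ x - m) with ⟨he, _⟩ | ⟨he, _⟩ <;>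
        rcases abs_cases m with ⟨he2, _⟩ | ⟨he2, _⟩ <;>
        nlinarith [this.1, this.2]
    simpa [mul_comm] using hb
  have hgint : Integrable (fun x => (δ/2) * p (ρ x) - (r * p r + (δ/2) * p r)) μ :=
    (hint.const_mul _).sub (integrable_const _)
  calc (δ/2) * (∫ x, p (ρ x) ∂μ) - V * (r * p r + (δ/2) * p r)
      = ∫ x, ((δ/2) * p (ρ x) - (r * p r + (δ/2) * p r)) ∂μ := by
        rw [integral_sub (hint.const_mul _) (integrable_const _),
          integral_const_mul, integral_const, smul_eq_mul, hV, measureReal_def]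
    _ ≤ ∫ x, p (ρ x) * (ρ x - m) ∂μ := integral_mono hgint hfint key
end

section
/- Let (Q, μ) be a finite measure space, ρ̄ > 0, and let p : [0, ρ̄] → ℝ be continuous and nondecreasing. Let ρ_n, ρ : Q → [0, ρ̄] be measurable functions and b, c : Q → ℝ be integrable functions such that for every bounded measurable g : Q → ℝ one has ∫_Q ρ_n·g dμ → ∫_Q ρ·g dμ, ∫_Q p(ρ_n)·g dμ → ∫_Q b·g dμ, and ∫_Q p(ρ_n)·ρ_n·g dμ → ∫_Q c·g dμ as n → ∞. Then c(x) ≥ b(x)·ρ(x) for μ-almost every x ∈ Q. -/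
open MeasureTheory Filter Set

private lemma integrable_of_bdd {Q : Type*} [MeasurableSpace Q] (μ : Measure Q)
    [IsFiniteMeasure μ] {f : Q → ℝ} (hf : Measurable f) (B : ℝ) (hB : ∀ x, |f x| ≤ B) :
    Integrable f μ :=
  (integrable_const B).mono' hf.aestronglyMeasurable (ae_of_all _ fun x => hB x)

/-- Minty-type inequality for a monotone pressure: if `ρ_n ⇀ ρ`, `p(ρ_n) ⇀ b` and
`p(ρ_n) ρ_n ⇀ c` weakly (tested against every bounded measurable `g`), with `p`
continuous and nondecreasing on `[0, ρ̄]` and `ρ_n, ρ` taking values in `[0, ρ̄]`,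
then `c ≥ b ρ` almost everywhere. -/
theorem stmt_13 {Q : Type*} [MeasurableSpace Q] (μ : Measure Q) [IsFiniteMeasure μ]
    (ρbar : ℝ) (hρbar : 0 < ρbar) (p : ℝ → ℝ)
    (hpc : ContinuousOn p (Set.Icc 0 ρbar)) (hpm : MonotoneOn p (Set.Icc 0 ρbar))
    (ρn : ℕ → Q → ℝ) (ρ : Q → ℝ) (b c : Q → ℝ)
    (hρn : ∀ n, Measurable (ρn n)) (hρnb : ∀ n x, ρn n x ∈ Set.Icc (0 : ℝ) ρbar)
    (hρ : Measurable ρ) (hρb : ∀ x, ρ x ∈ Set.Icc (0 : ℝ) ρbar)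
    (hb : Integrable b μ) (hc : Integrable c μ)
    (h1 : ∀ g : Q → ℝ, Measurable g → (∃ B : ℝ, ∀ x, |g x| ≤ B) →
      Tendsto (fun n => ∫ x, ρn n x * g x ∂μ) atTop (nhds (∫ x, ρ x * g x ∂μ)))
    (h2 : ∀ g : Q → ℝ, Measurable g → (∃ B : ℝ, ∀ x, |g x| ≤ B) →
      Tendsto (fun n => ∫ x, p (ρn n x) * g x ∂μ) atTop (nhds (∫ x, b x * g x ∂μ)))
    (h3 : ∀ g : Q → ℝ, Measurable g → (∃ B : ℝ, ∀ x, |g x| ≤ B) →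
      Tendsto (fun n => ∫ x, p (ρn n x) * ρn n x * g x ∂μ) atTop
        (nhds (∫ x, c x * g x ∂μ))) :
    ∀ᵐ x ∂μ, b x * ρ x ≤ c x := by
  classical
  -- clamp to [0, ρbar] and extend p to a continuous monotone function on ℝ
  set clamp : ℝ → ℝ := fun t => max 0 (min t ρbar) with hclampdef
  have hclampc : Continuous clamp := continuous_const.max ((continuous_id.min continuous_const))
  have hclampmem : ∀ t, clamp t ∈ Icc (0:ℝ) ρbar := by
    intro t
    constructor
    · exact le_max_left _ _
    · exact max_le hρbar.le (min_le_right _ _)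
  have hclampeq : ∀ t ∈ Icc (0:ℝ) ρbar, clamp t = t := by
    intro t ht
    simp only [hclampdef]
    rw [min_eq_left ht.2, max_eq_right ht.1]
  set q : ℝ → ℝ := fun t => p (clamp t) with hqdef
  have hqc : Continuous q := hpc.comp_continuous hclampc hclampmem
  have hq_eq : ∀ t ∈ Icc (0:ℝ) ρbar, q t = p t := fun t ht => by
    simp only [hqdef]; rw [hclampeq t ht]
  have hclampm : Monotone clamp := fun s t hst =>
    max_le_max le_rfl (min_le_min hst le_rfl)
  have hqm : Monotone q := fun s t hst =>
    hpm (hclampmem s) (hclampmem t) (hclampm hst)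
  -- bound on q
  obtain ⟨M, hM⟩ : ∃ M : ℝ, ∀ t, |q t| ≤ M := by
    obtain ⟨M, hM⟩ := (isCompact_Icc.image_of_continuousOn hpc).isBounded.subset_ball 0
    refine ⟨M, fun t => ?_⟩
    have h := hM (Set.mem_image_of_mem p (hclampmem t))
    have h' := Metric.mem_ball.1 h
    rw [Real.dist_eq, sub_zero] at h'
    exact h'.le
  have hMnn : 0 ≤ M := (abs_nonneg _).trans (hM 0)
  -- integrability of ρ
  have hρint : Integrable ρ μ :=
    integrable_of_bdd μ hρ ρbar fun x => abs_le.2 ⟨by linarith [(hρb x).1], (hρb x).2⟩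
  -- KEY: for each k ∈ [0, ρbar], a.e. x, 0 ≤ c x - k * b x - q k * (ρ x - k)
  have key : ∀ k ∈ Icc (0:ℝ) ρbar, ∀ᵐ x ∂μ, 0 ≤ c x - k * b x - q k * (ρ x - k) := by
    intro k hk
    set f : Q → ℝ := fun x => c x - k * b x - q k * (ρ x - k) with hfdef
    have hfint : Integrable f μ := by
      apply Integrable.sub (hc.sub (hb.const_mul k))
      exact ((hρint.sub (integrable_const k)).const_mul (q k))
    have := ae_nonneg_of_forall_setIntegral_nonneg hfint ?_
    · exact this
    intro s hs _
    set g : Q → ℝ := s.indicator (fun _ => (1:ℝ)) with hgdef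
    have hgm : Measurable g := (measurable_const.indicator hs)
    have hgb : ∀ x, |g x| ≤ 1 := by
      intro x
      by_cases hx : x ∈ s <;> simp [hgdef, hx]
    have hgnn : ∀ x, 0 ≤ g x := by
      intro x; by_cases hx : x ∈ s <;> simp [hgdef, hx]
    have hT1 := h1 g hgm ⟨1, hgb⟩
    have hT2 := h2 g hgm ⟨1, hgb⟩
    have hT3 := h3 g hgm ⟨1, hgb⟩
    -- the combination and its limit
    have hTall : Tendsto (fun n => ∫ x, p (ρn n x) * ρn n x * g x ∂μ
        - k * ∫ x, p (ρn n x) * g x ∂μ - q k * ∫ x, ρn n x * g x ∂μ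
        + (q k * k) * ∫ x, g x ∂μ) atTop
        (nhds (∫ x, c x * g x ∂μ - k * ∫ x, b x * g x ∂μ - q k * ∫ x, ρ x * g x ∂μ
        + (q k * k) * ∫ x, g x ∂μ)) :=
      (((hT3.sub (hT2.const_mul k)).sub (hT1.const_mul (q k))).add tendsto_const_nhds)
    -- each term of the sequence is nonnegative
    have hnn : ∀ n, 0 ≤ ∫ x, p (ρn n x) * ρn n x * g x ∂μ
        - k * ∫ x, p (ρn n x) * g x ∂μ - q k * ∫ x, ρn n x * g x ∂μ
        + (q k * k) * ∫ x, g x ∂μ := by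
      intro n
      have hmeasp : Measurable fun x => q (ρn n x) := hqc.measurable.comp (hρn n)
      -- integrabilities of the four pieces
      have i1 : Integrable (fun x => q (ρn n x) * ρn n x * g x) μ := by
        apply integrable_of_bdd μ ((hmeasp.mul (hρn n)).mul hgm) (M * ρbar * 1)
        intro x
        simp only [Pi.mul_apply]
        rw [abs_mul, abs_mul]
        refine mul_le_mul (mul_le_mul (hM _) ?_ (abs_nonneg _) hMnn) (hgb x)
          (abs_nonneg _) (by positivity)
        exact abs_le.2 ⟨by linarith [(hρnb n x).1], (hρnb n x).2⟩
      have i2 : Integrable (fun x => q (ρn n x) * g x) μ := by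
        apply integrable_of_bdd μ (hmeasp.mul hgm) (M * 1)
        intro x
        simp only [Pi.mul_apply]
        rw [abs_mul]
        exact mul_le_mul (hM _) (hgb x) (abs_nonneg _) hMnn
      have i3 : Integrable (fun x => ρn n x * g x) μ := by
        apply integrable_of_bdd μ ((hρn n).mul hgm) (ρbar * 1)
        intro x
        simp only [Pi.mul_apply]
        rw [abs_mul]
        exact mul_le_mul (abs_le.2 ⟨by linarith [(hρnb n x).1], (hρnb n x).2⟩) (hgb x)
          (abs_nonneg _) hρbar.le
      have i4 : Integrable (fun x => g x) μ := integrable_of_bdd μ hgm 1 hgb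
      -- rewrite p as q on values of ρn
      have hq1 : (∫ x, p (ρn n x) * ρn n x * g x ∂μ) = ∫ x, q (ρn n x) * ρn n x * g x ∂μ :=
        integral_congr_ae (ae_of_all _ fun x => by simp only [hq_eq _ (hρnb n x)])
      have hq2 : (∫ x, p (ρn n x) * g x ∂μ) = ∫ x, q (ρn n x) * g x ∂μ :=
        integral_congr_ae (ae_of_all _ fun x => by simp only [hq_eq _ (hρnb n x)])
      rw [hq1, hq2]
      have hpt : (fun x => (q (ρn n x) - q k) * (ρn n x - k) * g x)
          = fun x => (q (ρn n x) * ρn n x * g x - k * (q (ρn n x) * g x)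
            - q k * (ρn n x * g x)) + (q k * k) * g x := funext fun x => by ring
      have hexp : (∫ x, q (ρn n x) * ρn n x * g x ∂μ)
          - k * ∫ x, q (ρn n x) * g x ∂μ - q k * ∫ x, ρn n x * g x ∂μ
          + (q k * k) * ∫ x, g x ∂μ
          = ∫ x, (q (ρn n x) - q k) * (ρn n x - k) * g x ∂μ := by
        have isub1 : Integrable (fun x => q (ρn n x) * ρn n x * g x
            - k * (q (ρn n x) * g x)) μ := by exact i1.sub (i2.const_mul k)
        have isub : Integrable (fun x => q (ρn n x) * ρn n x * g x
            - k * (q (ρn n x) * g x) - q k * (ρn n x * g x)) μ := by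
          exact isub1.sub (i3.const_mul (q k))
        rw [hpt, integral_add isub (i4.const_mul (q k * k)),
          integral_sub isub1 (i3.const_mul (q k)), integral_sub i1 (i2.const_mul k),
          integral_const_mul, integral_const_mul, integral_const_mul]
      rw [hexp]
      apply integral_nonneg
      intro x
      apply mul_nonneg _ (hgnn x)
      rcases le_total (ρn n x) k with h | h
      · have h2 := hqm h
        nlinarith
      · have h2 := hqm h
        nlinarith
    have hlim : 0 ≤ ∫ x, c x * g x ∂μ - k * ∫ x, b x * g x ∂μ - q k * ∫ x, ρ x * g x ∂μ
        + (q k * k) * ∫ x, g x ∂μ := ge_of_tendsto' hTall hnn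
    -- identify limit with the set integral of f
    have e1 : (∫ x, c x * g x ∂μ) = ∫ x in s, c x ∂μ := by
      rw [← integral_indicator hs]
      exact integral_congr_ae (ae_of_all _ fun x => by
        by_cases hx : x ∈ s <;> simp [hgdef, hx])
    have e2 : (∫ x, b x * g x ∂μ) = ∫ x in s, b x ∂μ := by
      rw [← integral_indicator hs]
      exact integral_congr_ae (ae_of_all _ fun x => by
        by_cases hx : x ∈ s <;> simp [hgdef, hx])
    have e3 : (∫ x, ρ x * g x ∂μ) = ∫ x in s, ρ x ∂μ := by
      rw [← integral_indicator hs]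
      exact integral_congr_ae (ae_of_all _ fun x => by
        by_cases hx : x ∈ s <;> simp [hgdef, hx])
    have e4 : (∫ x, g x ∂μ) = ∫ x in s, (1:ℝ) ∂μ := by
      rw [← integral_indicator hs]
    have efin : (∫ x in s, f x ∂μ) = ∫ x in s, c x ∂μ - k * ∫ x in s, b x ∂μ
        - q k * ∫ x in s, ρ x ∂μ + (q k * k) * ∫ x in s, (1:ℝ) ∂μ := by
      have jc := hc.integrableOn (s := s)
      have jb := hb.integrableOn (s := s)
      have jρ := hρint.integrableOn (s := s)
      have j1 : IntegrableOn (fun _ : Q => (1:ℝ)) s μ := (integrable_const 1).integrableOn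
      have hpt2 : f = fun x => (c x - k * b x - q k * ρ x) + (q k * k) * (1:ℝ) :=
        funext fun x => by simp only [hfdef]; ring
      have ksub1 : Integrable (fun x : Q => c x - k * b x) (μ.restrict s) := by
        exact jc.sub (jb.const_mul k)
      have ksub : Integrable (fun x : Q => c x - k * b x - q k * ρ x) (μ.restrict s) := by
        exact ksub1.sub (jρ.const_mul (q k))
      rw [hpt2, integral_add ksub (j1.const_mul (q k * k)),
        integral_sub ksub1 (jρ.const_mul (q k)), integral_sub jc (jb.const_mul k),
        integral_const_mul, integral_const_mul, integral_const_mul]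
    rw [efin, ← e1, ← e2, ← e3, ← e4]
    exact hlim
  -- a countable dense subset of [0, ρbar]
  set D : Set ℝ := clamp '' (Set.range ((↑) : ℚ → ℝ)) with hDdef
  have hDcount : D.Countable := (Set.countable_range _).image _
  have hDsub : D ⊆ Icc 0 ρbar := by
    rintro _ ⟨t, _, rfl⟩; exact hclampmem t
  have hDdense : ∀ y ∈ Icc (0:ℝ) ρbar, y ∈ closure D := by
    intro y hy
    have hy' : y ∈ closure (Set.range ((↑) : ℚ → ℝ)) := Rat.denseRange_cast y
    obtain ⟨u, hu, hulim⟩ := mem_closure_iff_seq_limit.1 hy'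
    have : Tendsto (fun n => clamp (u n)) atTop (nhds y) := by
      have := (hclampc.tendsto y).comp hulim
      simpa [hclampeq y hy, Function.comp_def] using this
    exact mem_closure_of_tendsto this (Eventually.of_forall fun n =>
      ⟨u n, hu n, rfl⟩)
  -- combine over the countable set D
  have keyD : ∀ᵐ x ∂μ, ∀ k ∈ D, 0 ≤ c x - k * b x - q k * (ρ x - k) :=
    (ae_ball_iff hDcount).2 fun k hk => key k (hDsub hk)
  filter_upwards [keyD] with x hx
  -- pass from D to ρ x by continuity
  have hcl : IsClosed {k : ℝ | 0 ≤ c x - k * b x - q k * (ρ x - k)} := by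
    apply isClosed_le continuous_const
    exact (continuous_const.sub (continuous_id.mul continuous_const)).sub
      (hqc.mul (continuous_const.sub continuous_id))
  have hρx : ρ x ∈ {k : ℝ | 0 ≤ c x - k * b x - q k * (ρ x - k)} := by
    have : closure D ⊆ {k : ℝ | 0 ≤ c x - k * b x - q k * (ρ x - k)} :=
      hcl.closure_subset_iff.2 fun k hk => hx k hk
    exact this (hDdense (ρ x) (hρb x))
  have := hρx
  simp only [Set.mem_setOf_eq] at this
  nlinarith [this]
end

section
/- Let (Q, μ) be a finite measure space, ρ̄ > 0, a > 0, γ ≥ 1, and let p : [0, ρ̄] → ℝ be continuous and satisfy (p(x) − p(y))·(x − y) ≥ a·|x − y|^{γ+1} for all x, y ∈ [0, ρ̄]. Let ρ_n, ρ : Q → [0, ρ̄] be measurable functions and b, c : Q → ℝ be integrable functions such that for every bounded measurable g : Q → ℝ one has ∫_Q ρ_n·g dμ → ∫_Q ρ·g dμ, ∫_Q p(ρ_n)·g dμ → ∫_Q b·g dμ, and ∫_Q p(ρ_n)·ρ_n·g dμ → ∫_Q c·g dμ as n → ∞. Then a·limsup_{n→∞} ∫_Q |ρ_n − ρ|^{γ+1}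 dμ ≤ ∫_Q (c − b·ρ) dμ. -/
open MeasureTheory Filter Set

/-- Coercive Minty-type inequality: if `p` is continuous on `[0, ρ̄]` and satisfies
`(p(x) − p(y))(x − y) ≥ a |x − y|^{γ+1}`, and `ρ_n ⇀ ρ`, `p(ρ_n) ⇀ b`,
`p(ρ_n) ρ_n ⇀ c` weakly (tested against every bounded measurable `g`), then
`a limsup_n ∫ |ρ_n − ρ|^{γ+1} ≤ ∫ (c − b ρ)`. -/
theorem stmt_14 {Q : Type*} [MeasurableSpace Q] (μ : Measure Q) [IsFiniteMeasure μ]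
    (ρbar a γ : ℝ) (hρbar : 0 < ρbar) (ha : 0 < a) (hγ : 1 ≤ γ) (p : ℝ → ℝ)
    (hpc : ContinuousOn p (Set.Icc 0 ρbar))
    (hcoerc : ∀ x ∈ Set.Icc (0 : ℝ) ρbar, ∀ y ∈ Set.Icc (0 : ℝ) ρbar,
      a * |x - y| ^ (γ + 1) ≤ (p x - p y) * (x - y))
    (ρn : ℕ → Q → ℝ) (ρ : Q → ℝ) (b c : Q → ℝ)
    (hρn : ∀ n, Measurable (ρn n)) (hρnb : ∀ n x, ρn n x ∈ Set.Icc (0 : ℝ) ρbar)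
    (hρ : Measurable ρ) (hρb : ∀ x, ρ x ∈ Set.Icc (0 : ℝ) ρbar)
    (hb : Integrable b μ) (hc : Integrable c μ)
    (h1 : ∀ g : Q → ℝ, Measurable g → (∃ B : ℝ, ∀ x, |g x| ≤ B) →
      Tendsto (fun n => ∫ x, ρn n x * g x ∂μ) atTop (nhds (∫ x, ρ x * g x ∂μ)))
    (h2 : ∀ g : Q → ℝ, Measurable g → (∃ B : ℝ, ∀ x, |g x| ≤ B) →
      Tendsto (fun n => ∫ x, p (ρn n x) * g x ∂μ) atTop (nhds (∫ x, b x * g x ∂μ)))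
    (h3 : ∀ g : Q → ℝ, Measurable g → (∃ B : ℝ, ∀ x, |g x| ≤ B) →
      Tendsto (fun n => ∫ x, p (ρn n x) * ρn n x * g x ∂μ) atTop
        (nhds (∫ x, c x * g x ∂μ))) :
    a * Filter.limsup (fun n => ∫ x, |ρn n x - ρ x| ^ (γ + 1) ∂μ) atTop
      ≤ ∫ x, (c x - b x * ρ x) ∂μ := by
  classical
  -- truncation map into [0, ρbar]
  set f : ℝ → ℝ := fun x => min (max x 0) ρbar with hfdef
  have hfmem : ∀ x, f x ∈ Icc (0:ℝ) ρbar :=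
    fun x => ⟨le_min (le_max_right x 0) hρbar.le, min_le_right _ _⟩
  have hfcont : Continuous f := ((continuous_id.max continuous_const).min continuous_const)
  set q : ℝ → ℝ := fun x => p (f x) with hqdef
  have hqc : Continuous q := hpc.comp_continuous hfcont hfmem
  have hqeq : ∀ x ∈ Icc (0:ℝ) ρbar, q x = p x := by
    intro x hx
    simp only [hqdef, hfdef]
    rw [max_eq_left hx.1, min_eq_left hx.2]
  -- bound for q
  obtain ⟨M, hM⟩ := (isCompact_Icc (a := (0:ℝ)) (b := ρbar)).exists_bound_of_continuousOn hpc
  have hMq : ∀ x, |q x| ≤ M := fun x => hM _ (hfmem x)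
  -- integrability of bounded measurable functions
  have bddInt : ∀ (g : Q → ℝ), Measurable g → ∀ B, (∀ x, |g x| ≤ B) → Integrable g μ := by
    intro g hg B hB
    exact ⟨hg.aestronglyMeasurable, HasFiniteIntegral.of_bounded (C := B) (ae_of_all _ hB)⟩
  set I : ℕ → ℝ := fun n => ∫ x, |ρn n x - ρ x| ^ (γ + 1) ∂μ with hIdef
  set J : ℕ → ℝ := fun n => ∫ x, (q (ρn n x) - q (ρ x)) * (ρn n x - ρ x) ∂μ with hJdef
  -- basic bounds
  have habs : ∀ n x, |ρn n x - ρ x| ≤ ρbar := by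
    intro n x
    rw [abs_sub_le_iff]
    constructor
    · linarith [(hρnb n x).2, (hρb x).1]
    · linarith [(hρnb n x).1, (hρb x).2]
  have hγpos : (0:ℝ) < γ + 1 := by linarith
  have hIintegrable : ∀ n, Integrable (fun x => |ρn n x - ρ x| ^ (γ + 1)) μ := by
    intro n
    refine bddInt _ ?_ (ρbar ^ (γ + 1)) ?_
    · exact (Real.continuous_rpow_const hγpos.le).measurable.comp (((hρn n).sub hρ).abs)
    · intro x
      rw [abs_of_nonneg (Real.rpow_nonneg (abs_nonneg _) _)]
      exact Real.rpow_le_rpow (abs_nonneg _) (habs n x) hγpos.le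
  have hρnabs : ∀ n x, |ρn n x| ≤ ρbar := fun n x =>
    abs_le.mpr ⟨by linarith [(hρnb n x).1], (hρnb n x).2⟩
  have hρabs : ∀ x, |ρ x| ≤ ρbar := fun x => abs_le.mpr ⟨by linarith [(hρb x).1], (hρb x).2⟩
  have hMnn : 0 ≤ M := le_trans (abs_nonneg _) (hMq 0)
  -- key pointwise inequality, integrated
  have key : ∀ n, a * I n ≤ J n := by
    intro n
    rw [hIdef, hJdef, ← integral_const_mul]
    refine integral_mono ((hIintegrable n).const_mul a) ?_ ?_
    · refine bddInt _ ?_ ((M + M) * ρbar) ?_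
      · exact (((hqc.measurable.comp (hρn n)).sub (hqc.measurable.comp hρ)).mul
          ((hρn n).sub hρ))
      · intro x
        rw [abs_mul]
        refine mul_le_mul ?_ (habs n x) (abs_nonneg _) (by linarith)
        calc |q (ρn n x) - q (ρ x)| ≤ |q (ρn n x)| + |q (ρ x)| := abs_sub _ _
          _ ≤ M + M := add_le_add (hMq _) (hMq _)
    · intro x
      have := hcoerc (ρn n x) (hρnb n x) (ρ x) (hρb x)
      rwa [← hqeq _ (hρnb n x), ← hqeq _ (hρb x)] at this
  -- decompose J
  have hint1 : ∀ n, Integrable (fun x => q (ρn n x) * ρn n x) μ := by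
    intro n
    refine bddInt _ ((hqc.measurable.comp (hρn n)).mul (hρn n)) (M * ρbar) fun x => ?_
    rw [abs_mul]; exact mul_le_mul (hMq _) (hρnabs n x) (abs_nonneg _) hMnn
  have hint2 : ∀ n, Integrable (fun x => q (ρn n x) * ρ x) μ := by
    intro n
    refine bddInt _ ((hqc.measurable.comp (hρn n)).mul hρ) (M * ρbar) fun x => ?_
    rw [abs_mul]; exact mul_le_mul (hMq _) (hρabs x) (abs_nonneg _) hMnn
  have hint3 : ∀ n, Integrable (fun x => ρn n x * q (ρ x)) μ := by
    intro n
    refine bddInt _ ((hρn n).mul (hqc.measurable.comp hρ)) (ρbar * M) fun x => ?_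
    rw [abs_mul]; exact mul_le_mul (hρnabs n x) (hMq _) (abs_nonneg _) hρbar.le
  have hint4 : Integrable (fun x => q (ρ x) * ρ x) μ := by
    refine bddInt _ ((hqc.measurable.comp hρ).mul hρ) (M * ρbar) fun x => ?_
    rw [abs_mul]; exact mul_le_mul (hMq _) (hρabs x) (abs_nonneg _) hMnn
  have hJsplit : ∀ n, J n = (∫ x, q (ρn n x) * ρn n x ∂μ) - (∫ x, q (ρn n x) * ρ x ∂μ)
      - (∫ x, ρn n x * q (ρ x) ∂μ) + (∫ x, q (ρ x) * ρ x ∂μ) := by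
    intro n
    show (∫ x, (q (ρn n x) - q (ρ x)) * (ρn n x - ρ x) ∂μ) = _
    have : (fun x => (q (ρn n x) - q (ρ x)) * (ρn n x - ρ x))
        = fun x => q (ρn n x) * ρn n x - q (ρn n x) * ρ x - ρn n x * q (ρ x) + q (ρ x) * ρ x := by
      funext x; ring
    have hA2 : Integrable (fun x => q (ρn n x) * ρn n x - q (ρn n x) * ρ x) μ :=
      (hint1 n).sub (hint2 n)
    have hA3 : Integrable
        (fun x => q (ρn n x) * ρn n x - q (ρn n x) * ρ x - ρn n x * q (ρ x)) μ :=
      hA2.sub (hint3 n)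
    rw [this, integral_add hA3 hint4, integral_sub hA2 (hint3 n),
      integral_sub (hint1 n) (hint2 n)]
  -- limits of the pieces
  have hT1 : Tendsto (fun n => ∫ x, q (ρn n x) * ρn n x ∂μ) atTop (nhds (∫ x, c x ∂μ)) := by
    have := h3 (fun _ => 1) measurable_const ⟨1, fun x => by norm_num⟩
    simp only [mul_one] at this
    convert this using 2 with n
    refine integral_congr_ae (ae_of_all _ fun x => ?_)
    show q (ρn n x) * ρn n x = p (ρn n x) * ρn n x
    rw [hqeq _ (hρnb n x)]
  have hT2 : Tendsto (fun n => ∫ x, q (ρn n x) * ρ x ∂μ) atTop (nhds (∫ x, b x * ρ x ∂μ)) := by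
    have := h2 ρ hρ ⟨ρbar, hρabs⟩
    convert this using 2 with n
    refine integral_congr_ae (ae_of_all _ fun x => ?_)
    show q (ρn n x) * ρ x = p (ρn n x) * ρ x
    rw [hqeq _ (hρnb n x)]
  have hT3 : Tendsto (fun n => ∫ x, ρn n x * q (ρ x) ∂μ) atTop
      (nhds (∫ x, q (ρ x) * ρ x ∂μ)) := by
    have := h1 (fun x => q (ρ x)) (hqc.measurable.comp hρ) ⟨M, fun x => hMq _⟩
    convert this using 2
    refine integral_congr_ae (ae_of_all _ fun x => ?_)
    show q (ρ x) * ρ x = ρ x * q (ρ x)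
    rw [mul_comm]
  set L : ℝ := (∫ x, c x ∂μ) - (∫ x, b x * ρ x ∂μ) with hLdef
  have hJT : Tendsto J atTop (nhds L) := by
    have : Tendsto J atTop (nhds ((∫ x, c x ∂μ) - (∫ x, b x * ρ x ∂μ)
        - (∫ x, q (ρ x) * ρ x ∂μ) + (∫ x, q (ρ x) * ρ x ∂μ))) := by
      refine Tendsto.congr (fun n => (hJsplit n).symm) ?_
      exact (((hT1.sub hT2).sub hT3).add tendsto_const_nhds)
    simpa [hLdef, sub_add_cancel] using this
  -- RHS equals L
  have hbρ : Integrable (fun x => b x * ρ x) μ := by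
    have : Integrable (fun x => ρ x * b x) μ :=
      hb.bdd_mul hρ.aestronglyMeasurable (ae_of_all _ fun x => (Real.norm_eq_abs _).le.trans (hρabs x))
    exact this.congr (ae_of_all _ fun x => mul_comm _ _)
  have hRHS : (∫ x, (c x - b x * ρ x) ∂μ) = L := by
    rw [hLdef, integral_sub hc hbρ]
  rw [hRHS]
  -- limsup step
  have hIle : ∀ n, I n ≤ J n / a := by
    intro n
    rw [le_div_iff₀ ha, mul_comm]
    exact key n
  have hlimsup : Filter.limsup I atTop ≤ L / a := by
    have hconv : Tendsto (fun n => J n / a) atTop (nhds (L / a)) := hJT.div_const a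
    rw [← hconv.limsup_eq]
    refine limsup_le_limsup (Eventually.of_forall hIle) ?_ ?_
    · refine isCoboundedUnder_le_of_le atTop (x := 0) fun n => ?_
      exact integral_nonneg fun x => Real.rpow_nonneg (abs_nonneg _) _
    · exact hconv.isBoundedUnder_le
  calc a * Filter.limsup I atTop ≤ a * (L / a) :=
        mul_le_mul_of_nonneg_left hlimsup ha.le
    _ = L := by field_simp
end

section
/- Let (Q, μ) be a finite measure space, ρ̄ > 0, α ∈ (0, 1) and γ ≥ 1. Let ρ_n, ρ : Q → [0, ρ̄] be measurable functions and L : Q → ℝ be integrable, and suppose that for every bounded measurable g : Q → ℝ one has ∫_Q ρ_n log ρ_n · g dμ → ∫_Q L·g dμ as n → ∞ (with the convention 0·log 0 = 0). Then there is a constant C > 0, depending only on α and ρ̄, such that |∫_Q (L − ρ·log ρ) dμ| ≤ C · μ(Q)^{1 − α/(γ+1)} · limsup_{n→∞} ( ∫_Q |ρ_n − ρ|^{γ+1} dμ )^{α/(γ+1)}. -/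
open MeasureTheory Filter Set

lemma log_le_rpow_div {t p : ℝ} (ht : 0 < t) (hp : 0 < p) :
    Real.log t ≤ (t ^ p - 1) / p := by
  have h := Real.log_le_sub_one_of_pos (Real.rpow_pos_of_pos ht p)
  rw [Real.log_rpow ht] at h
  rw [le_div_iff₀ hp]
  nlinarith

lemma rpow_sub_rpow_le {x y e : ℝ} (hx : 0 ≤ x) (hxy : x ≤ y) (he0 : 0 ≤ e) (he1 : e ≤ 1) :
    y ^ e - x ^ e ≤ (y - x) ^ e := by
  have hy : 0 ≤ y := hx.trans hxy
  have hyx : (0:ℝ) ≤ y - x := by linarith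
  have key := NNReal.rpow_add_le_add_rpow (y - x).toNNReal x.toNNReal he0 he1
  have h1 : (y - x).toNNReal + x.toNNReal = y.toNNReal := by
    ext
    simp [Real.toNNReal_of_nonneg, hyx, hx, hy]
  rw [h1] at key
  have key' : (y.toNNReal ^ e : ℝ) ≤ ((y - x).toNNReal ^ e : ℝ) + (x.toNNReal ^ e : ℝ) := by
    exact_mod_cast key
  rw [Real.coe_toNNReal _ hy, Real.coe_toNNReal _ hyx, Real.coe_toNNReal _ hx] at key'
  linarith

-- a ≤ a^e * b^(1-e) for 0 ≤ a ≤ b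
lemma le_rpow_mul_rpow {a b e : ℝ} (ha : 0 ≤ a) (hab : a ≤ b) (he0 : 0 < e) (he1 : e < 1) :
    a ≤ a ^ e * b ^ (1 - e) := by
  have h1 : a = a ^ e * a ^ (1 - e) := by
    rw [← Real.rpow_add' ha (by norm_num)]
    norm_num
  calc a = a ^ e * a ^ (1 - e) := h1
    _ ≤ a ^ e * b ^ (1 - e) :=
      mul_le_mul_of_nonneg_left (Real.rpow_le_rpow ha hab (by linarith)) (Real.rpow_nonneg ha e)

-- a * b^(e-1) ≤ a^e for 0 ≤ a ≤ b, b > 0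
lemma mul_rpow_le_rpow {a b e : ℝ} (ha : 0 ≤ a) (hab : a ≤ b) (hb : 0 < b)
    (he0 : 0 < e) (he1 : e < 1) : a * b ^ (e - 1) ≤ a ^ e := by
  have h1 := le_rpow_mul_rpow ha hab he0 he1
  have h2 : b ^ (1 - e) * b ^ (e - 1) = 1 := by
    rw [← Real.rpow_add hb]
    norm_num
  have h3 : (0:ℝ) ≤ b ^ (e - 1) := Real.rpow_nonneg hb.le _
  calc a * b ^ (e - 1) ≤ (a ^ e * b ^ (1 - e)) * b ^ (e - 1) :=
        mul_le_mul_of_nonneg_right h1 h3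
    _ = a ^ e * (b ^ (1 - e) * b ^ (e - 1)) := by ring
    _ = a ^ e := by rw [h2, mul_one]

lemma xlogx_hoelder {ρbar α : ℝ} (hρbar : 0 < ρbar) (hα0 : 0 < α) (hα1 : α < 1) :
    ∀ x y : ℝ, x ∈ Set.Icc 0 ρbar → y ∈ Set.Icc 0 ρbar →
    |x * Real.log x - y * Real.log y| ≤
      (1 / (1 - α) + max (Real.log ρbar) 0 * ρbar ^ (1 - α) + ρbar ^ (1 - α) / α)
        * |x - y| ^ α := by
  set M := max (Real.log ρbar) 0 with hM
  set C := 1 / (1 - α) + M * ρbar ^ (1 - α) + ρbar ^ (1 - α) / α with hC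
  have hMpos : 0 ≤ M := le_max_right _ _
  have hCnn : 0 ≤ C := by
    have h1 : (0:ℝ) ≤ ρbar ^ (1 - α) := Real.rpow_nonneg hρbar.le _
    have h2 : (0:ℝ) < 1 / (1 - α) := div_pos one_pos (by linarith)
    have h3 : (0:ℝ) ≤ ρbar ^ (1 - α) / α := div_nonneg h1 hα0.le
    have h4 : (0:ℝ) ≤ M * ρbar ^ (1 - α) := mul_nonneg hMpos h1
    rw [hC]
    linarith
  -- main claim for x ≤ y
  have main : ∀ x y : ℝ, x ∈ Set.Icc 0 ρbar → y ∈ Set.Icc 0 ρbar → x ≤ y →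
      |x * Real.log x - y * Real.log y| ≤ C * (y - x) ^ α := by
    intro x y hx hy hxy
    obtain ⟨hx0, hxρ⟩ := hx
    obtain ⟨hy0, hyρ⟩ := hy
    rcases eq_or_lt_of_le hy0 with hy0' | hy0'
    · -- y = 0, so x = 0
      have hx' : x = 0 := le_antisymm (hxy.trans hy0'.symm.le) hx0
      rw [← hy0', hx']
      simp [Real.zero_rpow (ne_of_gt hα0)]
    · -- y > 0
      have hyx0 : (0:ℝ) ≤ y - x := by linarith
      -- bound |log y| ≤ y^(α-1)/(1-α) + M
      have hlogy : |Real.log y| ≤ y ^ (α - 1) / (1 - α) + M := by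
        have hpow : (0:ℝ) ≤ y ^ (α - 1) / (1 - α) :=
          div_nonneg (Real.rpow_nonneg hy0 _) (by linarith)
        rcases abs_cases (Real.log y) with ⟨h, _⟩ | ⟨h, _⟩
        · rw [h]
          have : Real.log y ≤ Real.log ρbar := Real.log_le_log hy0' hyρ
          have : Real.log y ≤ M := this.trans (le_max_left _ _)
          linarith
        · rw [h]
          have hinv : (0:ℝ) < y⁻¹ := inv_pos.2 hy0'
          have h2 := log_le_rpow_div hinv (p := 1 - α) (by linarith)
          rw [Real.log_inv] at h2
          have h3 : (y⁻¹) ^ (1 - α) = y ^ (α - 1) := by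
            rw [Real.inv_rpow hy0, ← Real.rpow_neg hy0]
            ring_nf
          rw [h3] at h2
          have h4 : (y ^ (α - 1) - 1) / (1 - α) ≤ y ^ (α - 1) / (1 - α) :=
            div_le_div_of_nonneg_right (by linarith) (by linarith)
          linarith [h2, h4, hMpos]
      -- Term 1: (y - x) * |log y| ≤ (1/(1-α) + M ρbar^(1-α)) (y-x)^α
      have hterm1 : (y - x) * |Real.log y| ≤
          (1 / (1 - α) + M * ρbar ^ (1 - α)) * (y - x) ^ α := by
        have e1 : (y - x) * y ^ (α - 1) ≤ (y - x) ^ α :=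
          mul_rpow_le_rpow hyx0 (by linarith) hy0' hα0 hα1
        have e2 : (y - x) ≤ (y - x) ^ α * ρbar ^ (1 - α) :=
          le_rpow_mul_rpow hyx0 (by linarith) hα0 hα1
        have e3 : (y - x) * |Real.log y| ≤ (y - x) * (y ^ (α - 1) / (1 - α) + M) :=
          mul_le_mul_of_nonneg_left hlogy hyx0
        have e4 : (y - x) * (y ^ (α - 1) / (1 - α)) ≤ (y - x) ^ α / (1 - α) := by
          rw [mul_div_assoc'] 
          exact div_le_div_of_nonneg_right e1 (by linarith) |>.trans_eq rfl
        have e5 : (y - x) * M ≤ (y - x) ^ α * ρbar ^ (1 - α) * M :=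
          mul_le_mul_of_nonneg_right e2 hMpos
        have hpa : (0:ℝ) ≤ (y - x) ^ α := Real.rpow_nonneg hyx0 _
        have e6 : (y - x) * (y ^ (α - 1) / (1 - α) + M)
            = (y - x) * (y ^ (α - 1) / (1 - α)) + (y - x) * M := by ring
        have e7 : (1 / (1 - α) + M * ρbar ^ (1 - α)) * (y - x) ^ α
            = (y - x) ^ α / (1 - α) + (y - x) ^ α * ρbar ^ (1 - α) * M := by ring
        linarith [e3, e4, e5, e6, e7]
      -- Term 2
      rcases eq_or_lt_of_le hx0 with hx0' | hx0'
      · -- x = 0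
        rw [← hx0']
        simp only [zero_mul, zero_sub, abs_neg, abs_mul, sub_zero]
        have : |y| = y := abs_of_nonneg hy0
        rw [this]
        have h6 := hterm1
        rw [← hx0', sub_zero] at h6
        have hC2 : (1 / (1 - α) + M * ρbar ^ (1 - α)) * y ^ α ≤ C * y ^ α := by
          apply mul_le_mul_of_nonneg_right ?_ (Real.rpow_nonneg hy0 _)
          rw [hC]
          have : (0:ℝ) ≤ ρbar ^ (1 - α) / α :=
            div_nonneg (Real.rpow_nonneg hρbar.le _) hα0.le
          linarith
        calc y * |Real.log y| ≤ (1 / (1 - α) + M * ρbar ^ (1 - α)) * y ^ α := h6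
          _ ≤ C * y ^ α := hC2
      · -- x > 0
        have hterm2 : x * (Real.log y - Real.log x) ≤ ρbar ^ (1 - α) / α * (y - x) ^ α := by
          have hlog : Real.log y - Real.log x = Real.log (y / x) :=
            (Real.log_div (ne_of_gt hy0') (ne_of_gt hx0')).symm
          have hyx : (0:ℝ) < y / x := div_pos hy0' hx0'
          have h7 := log_le_rpow_div hyx hα0
          have h8 : (y / x) ^ α = y ^ α / x ^ α := Real.div_rpow hy0 hx0'.le α
          have h9 : x * Real.log (y / x) ≤ x * (((y / x) ^ α - 1) / α) :=
            mul_le_mul_of_nonneg_left h7 hx0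
          have h10 : x * (((y / x) ^ α - 1) / α) = (x ^ (1 - α) * (y ^ α - x ^ α)) / α := by
            rw [h8]
            have hxα : (0:ℝ) < x ^ α := Real.rpow_pos_of_pos hx0' α
            have hx1 : x ^ (1 - α) * x ^ α = x := by
              rw [← Real.rpow_add hx0']
              norm_num
            field_simp
            linear_combination (x ^ α - y ^ α) * hx1
          have h11 : y ^ α - x ^ α ≤ (y - x) ^ α := rpow_sub_rpow_le hx0 hxy hα0.le hα1.le
          have h12 : x ^ (1 - α) ≤ ρbar ^ (1 - α) := Real.rpow_le_rpow hx0 hxρ (by linarith)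
          have hsub : (0:ℝ) ≤ y ^ α - x ^ α := by
            have := Real.rpow_le_rpow hx0 hxy hα0.le
            linarith
          have h13 : x ^ (1 - α) * (y ^ α - x ^ α) ≤ ρbar ^ (1 - α) * (y - x) ^ α := by
            have hxnn : (0:ℝ) ≤ x ^ (1 - α) := Real.rpow_nonneg hx0 _
            nlinarith [Real.rpow_nonneg hyx0 α]
          rw [hlog]
          calc x * Real.log (y / x) ≤ (x ^ (1 - α) * (y ^ α - x ^ α)) / α := h9.trans_eq h10
            _ ≤ (ρbar ^ (1 - α) * (y - x) ^ α) / α := div_le_div_of_nonneg_right h13 hα0.le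
            _ = ρbar ^ (1 - α) / α * (y - x) ^ α := by ring
        -- combine
        have hdecomp : x * Real.log x - y * Real.log y =
            -((y - x) * Real.log y) - x * (Real.log y - Real.log x) := by ring
        have hlogmono : Real.log x ≤ Real.log y := Real.log_le_log hx0' hxy
        have habs : |x * Real.log x - y * Real.log y| ≤
            (y - x) * |Real.log y| + x * (Real.log y - Real.log x) := by
          rw [hdecomp]
          have h14 : |(-((y - x) * Real.log y)) - x * (Real.log y - Real.log x)| ≤
              |(y - x) * Real.log y| + |x * (Real.log y - Real.log x)| := by
            calc _ ≤ |(-((y - x) * Real.log y))| + |x * (Real.log y - Real.log x)| :=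
                  abs_sub _ _
              _ = _ := by rw [abs_neg]
          have h15 : |(y - x) * Real.log y| = (y - x) * |Real.log y| := by
            rw [abs_mul, abs_of_nonneg hyx0]
          have h16 : |x * (Real.log y - Real.log x)| = x * (Real.log y - Real.log x) := by
            rw [abs_of_nonneg (mul_nonneg hx0 (by linarith))]
          rw [h15, h16] at h14
          exact h14
        calc |x * Real.log x - y * Real.log y|
            ≤ (y - x) * |Real.log y| + x * (Real.log y - Real.log x) := habs
          _ ≤ (1 / (1 - α) + M * ρbar ^ (1 - α)) * (y - x) ^ α
              + ρbar ^ (1 - α) / α * (y - x) ^ α := add_le_add hterm1 hterm2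
          _ = C * (y - x) ^ α := by rw [hC]; ring
  -- symmetrize
  intro x y hx hy
  rcases le_total x y with h | h
  · have h1 := main x y hx hy h
    rw [abs_sub_comm x y, abs_of_nonneg (by linarith : (0:ℝ) ≤ y - x)]
    exact h1
  · have h1 := main y x hy hx h
    rw [abs_sub_comm (y * Real.log y)] at h1
    rw [abs_of_nonneg (by linarith : (0:ℝ) ≤ x - y)]
    exact h1

lemma integrable_bdd {Q : Type} [MeasurableSpace Q] (μ : Measure Q) [IsFiniteMeasure μ]
    {f : Q → ℝ} (hf : Measurable f) {K : ℝ} (hK : ∀ x, |f x| ≤ K) : Integrable f μ := by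
  refine ⟨hf.aestronglyMeasurable, ?_⟩
  apply HasFiniteIntegral.of_bounded (C := K)
  exact ae_of_all _ fun x => by simpa [Real.norm_eq_abs] using hK x

lemma holder_int {Q : Type} [MeasurableSpace Q] (μ : Measure Q) [IsFiniteMeasure μ]
    {f : Q → ℝ} (hf : Measurable f) {K : ℝ} (hK : ∀ x, |f x| ≤ K) {α γ : ℝ}
    (hα0 : 0 < α) (hα1 : α < 1) (hγ : 1 ≤ γ) :
    ∫ x, |f x| ^ α ∂μ ≤
      (∫ x, |f x| ^ (γ + 1) ∂μ) ^ (α / (γ + 1)) *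
        (μ Set.univ).toReal ^ (1 - α / (γ + 1)) := by
  set p : ℝ := (γ + 1) / α with hp
  have hγ1 : (0:ℝ) < γ + 1 := by linarith
  have hp1 : 1 < p := by
    rw [hp, lt_div_iff₀ hα0]
    linarith
  have hpq : p.HolderConjugate (p / (p - 1)) :=
    (Real.holderConjugate_iff_eq_conjExponent hp1).2 rfl
  have hmeas : Measurable fun x => |f x| ^ α := hf.abs.pow measurable_const
  have hK0 : ∀ x, |f x| ≤ max K 0 := fun x => (hK x).trans (le_max_left _ _)
  have hbdd : ∀ x, ‖|f x| ^ α‖ ≤ (max K 0) ^ α := fun x => by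
    rw [Real.norm_eq_abs, abs_of_nonneg (Real.rpow_nonneg (abs_nonneg _) _)]
    exact Real.rpow_le_rpow (abs_nonneg _) (hK0 x) hα0.le
  have hmem : MemLp (fun x => |f x| ^ α) (ENNReal.ofReal p) μ :=
    MemLp.of_bound hmeas.aestronglyMeasurable _ (ae_of_all _ hbdd)
  have hmem1 : MemLp (fun _ : Q => (1:ℝ)) (ENNReal.ofReal (p / (p - 1))) μ := memLp_const 1
  have key := integral_mul_le_Lp_mul_Lq_of_nonneg hpq
    (ae_of_all _ fun x => Real.rpow_nonneg (abs_nonneg (f x)) α)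
    (ae_of_all _ fun _ => zero_le_one) hmem hmem1
  simp only [mul_one, Real.one_rpow] at key
  have h1 : ∀ x, (|f x| ^ α) ^ p = |f x| ^ (γ + 1) := fun x => by
    rw [← Real.rpow_mul (abs_nonneg _)]
    congr 1
    rw [hp]
    field_simp
  have hpne : p ≠ 0 := by linarith
  have h2 : (1:ℝ) / p = α / (γ + 1) := by
    rw [hp, one_div_div]
  have h3 : (1:ℝ) / (p / (p - 1)) = 1 - α / (γ + 1) := by
    rw [one_div_div, ← h2]
    field_simp
  have h4 : ∫ (_ : Q), (1:ℝ) ∂μ = (μ Set.univ).toReal := by simp [Measure.real]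
  simp_rw [h1, h2, h3, h4] at key
  exact key

/-- Control of the renormalized oscillation defect: there is a constant `C > 0`,
depending only on `α ∈ (0,1)` and `ρ̄`, such that whenever `ρ_n, ρ` take values in
`[0, ρ̄]` on a finite measure space and `ρ_n log ρ_n ⇀ L` weakly (tested against every
bounded measurable `g`), one has
`|∫ (L − ρ log ρ)| ≤ C μ(Q)^{1 − α/(γ+1)} (limsup_n ∫ |ρ_n − ρ|^{γ+1})^{α/(γ+1)}`. -/
theorem stmt_15 (ρbar α γ : ℝ) (hρbar : 0 < ρbar) (hα : α ∈ Set.Ioo (0 : ℝ) 1)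
    (hγ : 1 ≤ γ) :
    ∃ C > 0, ∀ (Q : Type) [MeasurableSpace Q] (μ : Measure Q), IsFiniteMeasure μ →
      ∀ (ρn : ℕ → Q → ℝ) (ρ : Q → ℝ) (L : Q → ℝ),
      (∀ n, Measurable (ρn n)) → (∀ n x, ρn n x ∈ Set.Icc (0 : ℝ) ρbar) →
      Measurable ρ → (∀ x, ρ x ∈ Set.Icc (0 : ℝ) ρbar) → Integrable L μ →
      (∀ g : Q → ℝ, Measurable g → (∃ B : ℝ, ∀ x, |g x| ≤ B) →
        Tendsto (fun n => ∫ x, ρn n x * Real.log (ρn n x) * g x ∂μ) atTop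
          (nhds (∫ x, L x * g x ∂μ))) →
      |∫ x, (L x - ρ x * Real.log (ρ x)) ∂μ| ≤
        C * (μ Set.univ).toReal ^ (1 - α / (γ + 1)) *
          (Filter.limsup (fun n => ∫ x, |ρn n x - ρ x| ^ (γ + 1) ∂μ) atTop)
            ^ (α / (γ + 1)) := by
  obtain ⟨hα0, hα1⟩ := hα
  set M := max (Real.log ρbar) 0 with hM
  set C := 1 / (1 - α) + M * ρbar ^ (1 - α) + ρbar ^ (1 - α) / α with hC
  have hMpos : 0 ≤ M := le_max_right _ _
  have hρpow : (0:ℝ) < ρbar ^ (1 - α) := Real.rpow_pos_of_pos hρbar _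
  have hCpos : 0 < C := by
    have h2 : (0:ℝ) < 1 / (1 - α) := div_pos one_pos (by linarith)
    have h3 : (0:ℝ) < ρbar ^ (1 - α) / α := div_pos hρpow hα0
    have h4 : (0:ℝ) ≤ M * ρbar ^ (1 - α) := mul_nonneg hMpos hρpow.le
    rw [hC]; linarith
  refine ⟨C, hCpos, ?_⟩
  intro Q _ μ _ ρn ρ L hρnmeas hρnmem hρmeas hρmem hLint hweak
  have hγ1 : (0:ℝ) < γ + 1 := by linarith
  set θ := α / (γ + 1) with hθ
  have hθ0 : 0 < θ := div_pos hα0 hγ1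
  have hθ1 : θ < 1 := by
    rw [hθ, div_lt_one hγ1]; linarith
  -- the L^{γ+1} distances
  set b : ℕ → ℝ := fun n => ∫ x, |ρn n x - ρ x| ^ (γ + 1) ∂μ with hb
  have hdiffbd : ∀ n x, |ρn n x - ρ x| ≤ ρbar := by
    intro n x
    have h1 := hρnmem n x
    have h2 := hρmem x
    rw [abs_le]
    constructor <;> [linarith [h1.1, h2.2]; linarith [h1.2, h2.1]]
  have hdiffmeas : ∀ n, Measurable fun x => ρn n x - ρ x := fun n => (hρnmeas n).sub hρmeas
  have hbnonneg : ∀ n, 0 ≤ b n := fun n =>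
    integral_nonneg fun x => Real.rpow_nonneg (abs_nonneg _) _
  have hbint : ∀ n, Integrable (fun x => |ρn n x - ρ x| ^ (γ + 1)) μ := by
    intro n
    apply integrable_bdd μ ((hdiffmeas n).abs.pow measurable_const)
      (K := ρbar ^ (γ + 1))
    intro x
    rw [abs_of_nonneg (Real.rpow_nonneg (abs_nonneg _) _)]
    exact Real.rpow_le_rpow (abs_nonneg _) (hdiffbd n x) hγ1.le
  have hbbd : ∀ n, b n ≤ ρbar ^ (γ + 1) * (μ Set.univ).toReal := by
    intro n
    calc b n ≤ ∫ _, ρbar ^ (γ + 1) ∂μ := by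
          apply integral_mono (hbint n) (integrable_const _)
          intro x
          exact Real.rpow_le_rpow (abs_nonneg _) (hdiffbd n x) hγ1.le
      _ = ρbar ^ (γ + 1) * (μ Set.univ).toReal := by
          rw [integral_const, smul_eq_mul, mul_comm]
          rfl
  -- integrability of ρ log ρ etc.
  have hxlog_bd : ∀ t : ℝ, t ∈ Set.Icc 0 ρbar → |t * Real.log t| ≤ C * ρbar ^ α := by
    intro t ht
    have h := xlogx_hoelder hρbar hα0 hα1 t 0 ht ⟨le_refl 0, hρbar.le⟩
    simp only [Real.log_zero, mul_zero, zero_mul, sub_zero] at h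
    calc |t * Real.log t| ≤ C * |t| ^ α := h
      _ ≤ C * ρbar ^ α := by
          apply mul_le_mul_of_nonneg_left ?_ hCpos.le
          apply Real.rpow_le_rpow (abs_nonneg _) ?_ hα0.le
          rw [abs_of_nonneg ht.1]
          exact ht.2
  have hρlogint : Integrable (fun x => ρ x * Real.log (ρ x)) μ :=
    integrable_bdd μ (hρmeas.mul (Real.measurable_log.comp hρmeas))
      fun x => hxlog_bd _ (hρmem x)
  have hρnlogint : ∀ n, Integrable (fun x => ρn n x * Real.log (ρn n x)) μ := fun n =>
    integrable_bdd μ ((hρnmeas n).mul (Real.measurable_log.comp (hρnmeas n)))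
      fun x => hxlog_bd _ (hρnmem n x)
  -- key per-n bound
  set c : ℝ := ∫ x, ρ x * Real.log (ρ x) ∂μ with hc
  set a : ℕ → ℝ := fun n => ∫ x, ρn n x * Real.log (ρn n x) ∂μ with ha
  have hkey : ∀ n, |a n - c| ≤ C * (μ Set.univ).toReal ^ (1 - θ) * b n ^ θ := by
    intro n
    have h1 : a n - c = ∫ x, (ρn n x * Real.log (ρn n x) - ρ x * Real.log (ρ x)) ∂μ :=
      (integral_sub (hρnlogint n) hρlogint).symm
    have h2 : |a n - c| ≤ ∫ x, |ρn n x * Real.log (ρn n x) - ρ x * Real.log (ρ x)| ∂μ := by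
      rw [h1]
      simpa [Real.norm_eq_abs] using
        norm_integral_le_integral_norm (μ := μ)
          (f := fun x => ρn n x * Real.log (ρn n x) - ρ x * Real.log (ρ x))
    have h3 : ∫ x, |ρn n x * Real.log (ρn n x) - ρ x * Real.log (ρ x)| ∂μ ≤
        ∫ x, C * |ρn n x - ρ x| ^ α ∂μ := by
      apply integral_mono ((hρnlogint n).sub hρlogint).abs ?_ ?_
      · apply Integrable.const_mul
        apply integrable_bdd μ ((hdiffmeas n).abs.pow measurable_const) (K := ρbar ^ α)
        intro x
        rw [abs_of_nonneg (Real.rpow_nonneg (abs_nonneg _) _)]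
        exact Real.rpow_le_rpow (abs_nonneg _) (hdiffbd n x) hα0.le
      · intro x
        exact xlogx_hoelder hρbar hα0 hα1 _ _ (hρnmem n x) (hρmem x)
    have h4 : ∫ x, C * |ρn n x - ρ x| ^ α ∂μ = C * ∫ x, |ρn n x - ρ x| ^ α ∂μ :=
      integral_const_mul C _
    have h5 := holder_int μ (hdiffmeas n) (hdiffbd n) hα0 hα1 hγ
    calc |a n - c| ≤ ∫ x, |ρn n x * Real.log (ρn n x) - ρ x * Real.log (ρ x)| ∂μ := h2
      _ ≤ C * ∫ x, |ρn n x - ρ x| ^ α ∂μ := by rw [← h4]; exact h3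
      _ ≤ C * (b n ^ θ * (μ Set.univ).toReal ^ (1 - θ)) :=
          mul_le_mul_of_nonneg_left h5 hCpos.le
      _ = C * (μ Set.univ).toReal ^ (1 - θ) * b n ^ θ := by ring
  -- convergence of a n
  have hA : Tendsto a atTop (nhds (∫ x, L x ∂μ)) := by
    have := hweak (fun _ => 1) measurable_const ⟨1, fun x => by norm_num⟩
    simpa using this
  have hAc : Tendsto (fun n => |a n - c|) atTop
      (nhds |∫ x, (L x - ρ x * Real.log (ρ x)) ∂μ|) := by
    have h1 : ∫ x, (L x - ρ x * Real.log (ρ x)) ∂μ = (∫ x, L x ∂μ) - c :=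
      integral_sub hLint hρlogint
    rw [h1]
    exact ((hA.sub tendsto_const_nhds).abs)
  -- limsup machinery
  set B := Filter.limsup b atTop with hB
  set r : ℝ := C * (μ Set.univ).toReal ^ (1 - θ) with hr
  have hrnn : 0 ≤ r := mul_nonneg hCpos.le (Real.rpow_nonneg ENNReal.toReal_nonneg _)
  set φ : ℝ → ℝ := fun t => r * max t 0 ^ θ with hφ
  have hφmono : Monotone φ := by
    intro s t hst
    apply mul_le_mul_of_nonneg_left ?_ hrnn
    exact Real.rpow_le_rpow (le_max_right _ _) (max_le_max hst (le_refl 0)) hθ0.le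
  have hbddb : IsBoundedUnder (· ≤ ·) atTop b :=
    isBoundedUnder_of ⟨ρbar ^ (γ + 1) * (μ Set.univ).toReal, hbbd⟩
  have hcobddb : IsCoboundedUnder (· ≤ ·) atTop b :=
    IsBoundedUnder.isCoboundedUnder_le (isBoundedUnder_of ⟨0, hbnonneg⟩)
  have hφcont : ContinuousAt φ B := by
    have h1 : ContinuousAt (fun t : ℝ => max t 0 ^ θ) B :=
      (Real.continuousAt_rpow_const _ _ (Or.inr hθ0.le)).comp
        ((continuous_id.max continuous_const).continuousAt)
    exact continuousAt_const.mul h1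
  have hmap := hφmono.map_limsup_of_continuousAt b hφcont hbddb hcobddb
  have hB0 : 0 ≤ B :=
    le_limsup_of_frequently_le (Frequently.of_forall hbnonneg) hbddb
  have hφb : ∀ n, φ (b n) = r * b n ^ θ := fun n => by
    rw [hφ]; simp [max_eq_left (hbnonneg n)]
  have hφB : φ B = r * B ^ θ := by rw [hφ]; simp [max_eq_left hB0]
  have hlimleft : |∫ x, (L x - ρ x * Real.log (ρ x)) ∂μ| =
      Filter.limsup (fun n => |a n - c|) atTop := hAc.limsup_eq.symm
  have hstep : Filter.limsup (fun n => |a n - c|) atTop ≤ Filter.limsup (φ ∘ b) atTop := by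
    apply Filter.limsup_le_limsup
    · apply Eventually.of_forall
      intro n
      calc |a n - c| ≤ C * (μ Set.univ).toReal ^ (1 - θ) * b n ^ θ := hkey n
        _ = φ (b n) := by rw [hφb n, hr]
    · exact IsBoundedUnder.isCoboundedUnder_le
        (isBoundedUnder_of ⟨0, fun n => abs_nonneg _⟩)
    · exact isBoundedUnder_of ⟨φ (ρbar ^ (γ + 1) * (μ Set.univ).toReal),
        fun n => hφmono (hbbd n)⟩
  calc |∫ x, (L x - ρ x * Real.log (ρ x)) ∂μ|
      = Filter.limsup (fun n => |a n - c|) atTop := hlimleft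
    _ ≤ Filter.limsup (φ ∘ b) atTop := hstep
    _ = φ B := hmap.symm
    _ = C * (μ Set.univ).toReal ^ (1 - θ) * B ^ θ := by rw [hφB, hr]
    _ = C * (μ Set.univ).toReal ^ (1 - α / (γ + 1)) *
        (Filter.limsup (fun n => ∫ x, |ρn n x - ρ x| ^ (γ + 1) ∂μ) atTop) ^ (α / (γ + 1)) := by
      rw [hθ, hB, hb]
end
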